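/- arXiv:2211.13668 — 7 statements merged into one kernel-verified Lean document; each statement's English description precedes it below -/
import Mathlib

section
/- Let h : ℝ^d → ℝ be differentiable with l-Lipschitz gradient, suppose h attains a finite maximum h* = max_y h(y) with nonempty argmax set Y* = argmax h, and suppose h satisfies the PL condition with constant μ > 0: ‖∇h(y)‖² ≥ 2μ (h* − h(y)) for all y. Then for every y, ‖∇h(y)‖ ≥ μ · dist(y, Y*), where dist(y, Y*) = inf_{y'∈Y*} ‖y − y'‖. -/
open MeasureTheory Metric

open InnerProductSpace in
/-- Taylor-type bound from Lipschitz gradient. -/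
lemma aux_taylor_PL {d : ℕ} (h : EuclideanSpace ℝ (Fin d) → ℝ) (L : ℝ) (hL : 0 ≤ L)
    (hdiff : Differentiable ℝ h)
    (hlip : ∀ y1 y2, ‖gradient h y1 - gradient h y2‖ ≤ L * ‖y1 - y2‖)
    (x v : EuclideanSpace ℝ (Fin d)) :
    |h (x + v) - h x - inner ℝ (gradient h x) v| ≤ L * ‖v‖ ^ 2 := by
  set g := gradient h x with hg
  have hd : ∀ t : ℝ, HasDerivAt (fun t : ℝ => h (x + t • v) - t * (inner ℝ g v : ℝ))
      ((inner ℝ (gradient h (x + t • v)) v : ℝ) - (inner ℝ g v : ℝ)) t := by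
    intro t
    have hc : HasDerivAt (fun t : ℝ => x + t • v) v t := by
      simpa using ((hasDerivAt_id t).smul_const v).const_add x
    have hF : HasFDerivAt h (toDual ℝ _ (gradient h (x + t • v))) (x + t • v) :=
      (hdiff (x + t • v)).hasGradientAt
    have hcomp := hF.comp_hasDerivAt t hc
    have hmul : HasDerivAt (fun t : ℝ => t * (inner ℝ g v : ℝ)) (inner ℝ g v : ℝ) t := by
      simpa using (hasDerivAt_id t).mul_const (inner ℝ g v : ℝ)
    exact (hcomp.sub hmul).congr_deriv (by simp [toDual_apply_apply])
  have bound : ∀ t ∈ Set.Ico (0:ℝ) 1,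
      ‖(inner ℝ (gradient h (x + t • v)) v : ℝ) - (inner ℝ g v : ℝ)‖ ≤ L * ‖v‖ ^ 2 := by
    intro t ht
    have h1 : (inner ℝ (gradient h (x + t • v)) v : ℝ) - (inner ℝ g v : ℝ)
        = inner ℝ (gradient h (x + t • v) - g) v := by rw [inner_sub_left]
    rw [h1, Real.norm_eq_abs]
    calc |(inner ℝ (gradient h (x + t • v) - g) v : ℝ)|
        ≤ ‖gradient h (x + t • v) - g‖ * ‖v‖ := abs_real_inner_le_norm _ _
      _ ≤ (L * ‖x + t • v - x‖) * ‖v‖ := by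
          apply mul_le_mul_of_nonneg_right _ (norm_nonneg _)
          simpa [hg] using hlip (x + t • v) x
      _ ≤ L * ‖v‖ ^ 2 := by
          have hnv : ‖x + t • v - x‖ = t * ‖v‖ := by
            simp [norm_smul, Real.norm_eq_abs, abs_of_nonneg ht.1]
          rw [hnv]
          have ht1 : t ≤ 1 := ht.2.le
          nlinarith [mul_le_mul_of_nonneg_left ht1
            (by positivity : (0:ℝ) ≤ L * ‖v‖ ^ 2)]
  have key := norm_image_sub_le_of_norm_deriv_le_segment_01'
    (f := fun t : ℝ => h (x + t • v) - t * (inner ℝ g v : ℝ))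
    (f' := fun t : ℝ => (inner ℝ (gradient h (x + t • v)) v : ℝ) - (inner ℝ g v : ℝ))
    (fun t _ => (hd t).hasDerivWithinAt) bound
  rw [show h (x + v) - h x - (inner ℝ g v : ℝ)
      = (h (x + (1:ℝ) • v) - (1:ℝ) * (inner ℝ g v : ℝ))
        - (h (x + (0:ℝ) • v) - (0:ℝ) * (inner ℝ g v : ℝ)) by
    rw [one_smul, zero_smul, add_zero]; ring, ← Real.norm_eq_abs]
  exact key

/-- Pure arithmetic helper for the per-step inequality. -/
lemma aux_arith_PL {c s G a b sa sb : ℝ} (hc : 0 < c) (hs : 0 < s)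
    (hsa2 : sa ^ 2 = a) (hsb2 : sb ^ 2 = b) (hsa : 0 < sa) (hsb0 : 0 ≤ sb)
    (hdesc : b ≤ a - c * G ^ 2) (hG0 : 0 ≤ G) (hGsa : s * sa ≤ G) :
    c * s / 2 * G ≤ sa - sb := by
  have hb_le : sb ≤ sa := by nlinarith [mul_nonneg hc.le (sq_nonneg G)]
  have hG : 0 < G := lt_of_lt_of_le (mul_pos hs hsa) hGsa
  have h1 : c * G ^ 2 ≤ (sa - sb) * (sa + sb) := by nlinarith
  have h3 : 0 ≤ sa - sb := by linarith
  have h4 : s * (sa + sb) ≤ 2 * G := by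
    nlinarith [mul_le_mul_of_nonneg_left hb_le hs.le]
  have h5 : s * (c * G ^ 2) ≤ (sa - sb) * (2 * G) := by
    calc s * (c * G ^ 2) ≤ s * ((sa - sb) * (sa + sb)) :=
          mul_le_mul_of_nonneg_left h1 hs.le
      _ = (sa - sb) * (s * (sa + sb)) := by ring
      _ ≤ (sa - sb) * (2 * G) := mul_le_mul_of_nonneg_left h4 h3
  nlinarith [h5, hG, h3]

/-- Key step: for any small step size η, a discrete gradient-ascent argument gives the bound
up to a factor `1 - L*η`. -/
lemma aux_key_PL {d : ℕ} (h : EuclideanSpace ℝ (Fin d) → ℝ) (hstar L μ : ℝ)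
    (hμ : 0 < μ) (hL : 0 ≤ L)
    (hdiff : Differentiable ℝ h)
    (hlip : ∀ y1 y2, ‖gradient h y1 - gradient h y2‖ ≤ L * ‖y1 - y2‖)
    (hmax : IsGreatest (Set.range h) hstar)
    (hPL : ∀ y, ‖gradient h y‖ ^ 2 ≥ 2 * μ * (hstar - h y))
    (y : EuclideanSpace ℝ (Fin d)) (η : ℝ) (hη : 0 < η) (hη1 : L * η < 1)
    (hη2 : 2 * μ * η ≤ 1) :
    (1 - L * η) * (μ * Metric.infDist y {y' | h y' = hstar}) ≤ ‖gradient h y‖ := by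
  classical
  let z : ℕ → EuclideanSpace ℝ (Fin d) :=
    fun n => Nat.rec y (fun _ p => p + η • gradient h p) n
  have hz0 : z 0 = y := rfl
  have hzs : ∀ n, z (n + 1) = z n + η • gradient h (z n) := fun n => rfl
  clear_value z
  set c : ℝ := η * (1 - L * η) with hc_def
  have hc : 0 < c := by rw [hc_def]; nlinarith
  clear_value c
  set s : ℝ := Real.sqrt (2 * μ) with hs_def
  have hs : 0 < s := Real.sqrt_pos.2 (by linarith)
  have hs2 : s * s = 2 * μ := Real.mul_self_sqrt (by linarith)
  clear_value s
  set Δ : ℕ → ℝ := fun n => hstar - h (z n) with hΔ_def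
  have hΔ0 : ∀ n, 0 ≤ Δ n := fun n => sub_nonneg.2 (hmax.2 ⟨z n, rfl⟩)
  have hPLn : ∀ n, 2 * μ * Δ n ≤ ‖gradient h (z n)‖ ^ 2 := fun n => hPL (z n)
  have hΔy : Δ 0 = hstar - h y := by simp only [hΔ_def, hz0]
  have hΔn : ∀ n, Δ n = hstar - h (z n) := fun n => by simp only [hΔ_def]
  clear_value Δ
  -- descent
  have descent : ∀ n, Δ (n + 1) ≤ Δ n - c * ‖gradient h (z n)‖ ^ 2 := by
    intro n
    have ht := aux_taylor_PL h L hL hdiff hlip (z n) (η • gradient h (z n))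
    have hi : (inner ℝ (gradient h (z n)) (η • gradient h (z n)) : ℝ)
        = η * ‖gradient h (z n)‖ ^ 2 := by
      rw [real_inner_smul_right, real_inner_self_eq_norm_sq]
    have hn : ‖η • gradient h (z n)‖ ^ 2 = η ^ 2 * ‖gradient h (z n)‖ ^ 2 := by
      rw [norm_smul, Real.norm_eq_abs, abs_of_pos hη, mul_pow]
    rw [hi, hn] at ht
    obtain ⟨h1, h2⟩ := abs_le.1 ht
    have hz' : z (n + 1) = z n + η • gradient h (z n) := hzs n
    have e1 : Δ (n + 1) = hstar - h (z n + η • gradient h (z n)) := by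
      rw [hΔn (n + 1), hz']
    have e2 : Δ n = hstar - h (z n) := hΔn n
    rw [e1, e2, hc_def]
    nlinarith [norm_nonneg (gradient h (z n))]
  have gradsq : ∀ n, c * ‖gradient h (z n)‖ ^ 2 ≤ Δ n := by
    intro n
    have := descent n
    have := hΔ0 (n + 1)
    linarith
  have hcη : c ≤ η := by
    rw [hc_def]
    nlinarith [mul_nonneg (mul_nonneg hL hη.le) hη.le]
  set r : ℝ := 1 - 2 * μ * c with hr_def
  have hr0 : 0 ≤ r := by
    rw [hr_def]
    nlinarith [mul_le_mul_of_nonneg_left hcη (by linarith : (0:ℝ) ≤ 2 * μ)]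
  have hr1 : r < 1 := by
    rw [hr_def]
    nlinarith
  clear_value r
  have decay : ∀ n, Δ (n + 1) ≤ r * Δ n := by
    intro n
    have h1 := descent n
    have h2 := hPLn n
    rw [hr_def]
    nlinarith [mul_nonneg hc.le (sub_nonneg.2 h2)]
  have geom : ∀ n, Δ n ≤ r ^ n * Δ 0 := by
    intro n
    induction n with
    | zero => simp
    | succ n ih =>
      calc Δ (n + 1) ≤ r * Δ n := decay n
        _ ≤ r * (r ^ n * Δ 0) := by
            exact mul_le_mul_of_nonneg_left ih hr0
        _ = r ^ (n + 1) * Δ 0 := by ring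
  -- per-step sqrt inequality
  have step_ineq : ∀ n, c * s / 2 * ‖gradient h (z n)‖
      ≤ Real.sqrt (Δ n) - Real.sqrt (Δ (n + 1)) := by
    intro n
    by_cases ha : Δ n ≤ 0
    · have haz : Δ n = 0 := le_antisymm ha (hΔ0 n)
      have hsq : ‖gradient h (z n)‖ ^ 2 ≤ 0 := by
        have h1 := gradsq n
        nlinarith [hc, h1, haz]
      have hGsq : ‖gradient h (z n)‖ ^ 2 = 0 := le_antisymm hsq (sq_nonneg _)
      have hG0 : ‖gradient h (z n)‖ = 0 := pow_eq_zero_iff two_ne_zero |>.1 hGsq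
      have hb0 : Δ (n + 1) = 0 := by
        have h1 := descent n
        have h2 := hΔ0 (n + 1)
        have h3 : c * ‖gradient h (z n)‖ ^ 2 = 0 := by rw [hGsq, mul_zero]
        linarith
      rw [haz, hb0, hG0]
      simp
    · push_neg at ha
      have hsa : 0 < Real.sqrt (Δ n) := Real.sqrt_pos.2 ha
      have hGsa : s * Real.sqrt (Δ n) ≤ ‖gradient h (z n)‖ := by
        have h1 : Real.sqrt (2 * μ * Δ n) ≤ Real.sqrt (‖gradient h (z n)‖ ^ 2) :=
          Real.sqrt_le_sqrt (hPLn n)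
        rw [Real.sqrt_sq (norm_nonneg _)] at h1
        rw [Real.sqrt_mul (by linarith : (0:ℝ) ≤ 2 * μ), ← hs_def] at h1
        exact h1
      exact aux_arith_PL hc hs (Real.sq_sqrt (hΔ0 n)) (Real.sq_sqrt (hΔ0 (n + 1)))
        hsa (Real.sqrt_nonneg _) (descent n) (norm_nonneg _) hGsa
  -- telescoping distance bound
  set K : ℝ := 2 * η / (c * s) with hK_def
  have hK : 0 < K := by rw [hK_def]; positivity
  clear_value K
  have step_dist : ∀ n, dist (z n) (z (n + 1)) ≤ K * (Real.sqrt (Δ n) - Real.sqrt (Δ (n + 1))) := by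
    intro n
    have h1 : dist (z n) (z (n + 1)) = η * ‖gradient h (z n)‖ := by
      rw [hzs n, dist_eq_norm]
      simp [norm_smul, Real.norm_eq_abs, abs_of_pos hη]
    rw [h1]
    have h2 := step_ineq n
    have h3 := mul_le_mul_of_nonneg_left h2 (le_of_lt (by positivity : (0:ℝ) < 2 * η / (c * s)))
    rw [← hK_def] at h3
    calc η * ‖gradient h (z n)‖
        = K * (c * s / 2 * ‖gradient h (z n)‖) := by
          rw [hK_def]
          field_simp
      _ ≤ K * (Real.sqrt (Δ n) - Real.sqrt (Δ (n + 1))) := h3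
  have tele : ∀ n, dist y (z n) + K * Real.sqrt (Δ n) ≤ K * Real.sqrt (Δ 0) := by
    intro n
    induction n with
    | zero => simp [hz0]
    | succ n ih =>
      have h1 : dist y (z (n + 1)) ≤ dist y (z n) + dist (z n) (z (n + 1)) := dist_triangle _ _ _
      have h2 := step_dist n
      linarith
  have dist_bound : ∀ n, dist y (z n) ≤ K * Real.sqrt (Δ 0) := by
    intro n
    have h1 := tele n
    have h2 : 0 ≤ K * Real.sqrt (Δ n) := by positivity
    linarith
  -- Cauchy sequence and limit
  have step_geom : ∀ n, dist (z n) (z (n + 1))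
      ≤ (η * Real.sqrt (Δ 0 / c)) * (Real.sqrt r) ^ n := by
    intro n
    have h1 : dist (z n) (z (n + 1)) = η * ‖gradient h (z n)‖ := by
      rw [hzs n, dist_eq_norm]
      simp [norm_smul, Real.norm_eq_abs, abs_of_pos hη]
    rw [h1]
    have h2 : ‖gradient h (z n)‖ ^ 2 ≤ r ^ n * (Δ 0 / c) := by
      rw [mul_div_assoc']
      rw [le_div_iff₀ hc]
      linarith [gradsq n, geom n]
    have h3 : ‖gradient h (z n)‖ ≤ Real.sqrt (r ^ n * (Δ 0 / c)) := by
      rw [← Real.sqrt_sq (norm_nonneg (gradient h (z n)))]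
      exact Real.sqrt_le_sqrt h2
    have hsp : ∀ m : ℕ, Real.sqrt (r ^ m) = (Real.sqrt r) ^ m := by
      intro m
      induction m with
      | zero => simp
      | succ m ih => rw [pow_succ, pow_succ, Real.sqrt_mul (pow_nonneg hr0 m), ih]
    have h4 : Real.sqrt (r ^ n * (Δ 0 / c)) = (Real.sqrt r) ^ n * Real.sqrt (Δ 0 / c) := by
      rw [Real.sqrt_mul (pow_nonneg hr0 n), hsp n]
    rw [h4] at h3
    calc η * ‖gradient h (z n)‖ ≤ η * ((Real.sqrt r) ^ n * Real.sqrt (Δ 0 / c)) :=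
          mul_le_mul_of_nonneg_left h3 hη.le
      _ = (η * Real.sqrt (Δ 0 / c)) * (Real.sqrt r) ^ n := by ring
  have hsr : Real.sqrt r < 1 := by
    calc Real.sqrt r < Real.sqrt 1 := Real.sqrt_lt_sqrt hr0 hr1
      _ = 1 := Real.sqrt_one
  have hcs : CauchySeq z := cauchySeq_of_le_geometric (Real.sqrt r)
    (η * Real.sqrt (Δ 0 / c)) hsr step_geom
  obtain ⟨w, hw⟩ := cauchySeq_tendsto_of_complete hcs
  -- limit is a maximizer
  have hΔlim : Filter.Tendsto Δ Filter.atTop (nhds 0) := by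
    apply squeeze_zero hΔ0 geom
    have := (tendsto_pow_atTop_nhds_zero_of_lt_one hr0 hr1).mul_const (Δ 0)
    simpa using this
  have hhw : h w = hstar := by
    have h1 : Filter.Tendsto (fun n => h (z n)) Filter.atTop (nhds (h w)) :=
      ((hdiff.continuous.continuousAt).tendsto).comp hw
    have h2 : Filter.Tendsto (fun n => h (z n)) Filter.atTop (nhds hstar) := by
      have h3 := Filter.Tendsto.const_sub hstar hΔlim
      have h4 : (fun n => hstar - Δ n) = fun n => h (z n) := by
        funext n; rw [hΔn n]; ring
      rw [h4] at h3
      simpa using h3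
    exact tendsto_nhds_unique h1 h2
  have hdyw : dist y w ≤ K * Real.sqrt (Δ 0) := by
    have h1 : Filter.Tendsto (fun n => dist y (z n)) Filter.atTop (nhds (dist y w)) :=
      Filter.Tendsto.dist tendsto_const_nhds hw
    exact le_of_tendsto h1 (Filter.Eventually.of_forall dist_bound)
  have hinf : Metric.infDist y {y' | h y' = hstar} ≤ K * Real.sqrt (Δ 0) :=
    le_trans (Metric.infDist_le_dist_of_mem hhw) hdyw
  -- final computation
  have hPL0 : s * Real.sqrt (Δ 0) ≤ ‖gradient h y‖ := by
    have h1 : Real.sqrt (2 * μ * Δ 0) ≤ Real.sqrt (‖gradient h (z 0)‖ ^ 2) :=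
      Real.sqrt_le_sqrt (hPLn 0)
    rw [Real.sqrt_sq (norm_nonneg _), Real.sqrt_mul (by linarith : (0:ℝ) ≤ 2 * μ), ← hs_def] at h1
    rw [hz0] at h1
    exact h1
  have hη1' : 0 ≤ 1 - L * η := by linarith
  have hKs : (1 - L * η) * (μ * K) = s := by
    have hD : (η * (1 - L * η)) * s ≠ 0 :=
      (mul_pos (mul_pos hη (by linarith)) hs).ne'
    have e : (1 - L * η) * (μ * (2 * η / ((η * (1 - L * η)) * s)))
        = ((1 - L * η) * (μ * (2 * η))) / ((η * (1 - L * η)) * s) := by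
      rw [← mul_div_assoc, ← mul_div_assoc]
    rw [hK_def, hc_def, e, div_eq_iff hD]
    linear_combination (-(η * (1 - L * η))) * hs2
  calc (1 - L * η) * (μ * Metric.infDist y {y' | h y' = hstar})
      ≤ (1 - L * η) * (μ * (K * Real.sqrt (Δ 0))) := by
        apply mul_le_mul_of_nonneg_left _ hη1'
        exact mul_le_mul_of_nonneg_left hinf hμ.le
    _ = ((1 - L * η) * (μ * K)) * Real.sqrt (Δ 0) := by ring
    _ = s * Real.sqrt (Δ 0) := by rw [hKs]
    _ ≤ ‖gradient h y‖ := hPL0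

/-- If `h` is differentiable with `l`-Lipschitz gradient, attains a finite maximum `hstar` with
(nonempty) maximizer set `Y* = {y | h y = hstar}`, and satisfies the PL condition with constant
`μ > 0`, then `‖∇h(y)‖ ≥ μ · dist(y, Y*)` for every `y`. -/
theorem PL_implies_quadratic_growth_of_distance {d : ℕ}
    (h : EuclideanSpace ℝ (Fin d) → ℝ) (hstar l μ : ℝ) (hμ : 0 < μ)
    (hdiff : Differentiable ℝ h)
    (hlip : ∀ y1 y2, ‖gradient h y1 - gradient h y2‖ ≤ l * ‖y1 - y2‖)
    (hmax : IsGreatest (Set.range h) hstar)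
    (hPL : ∀ y, ‖gradient h y‖ ^ 2 ≥ 2 * μ * (hstar - h y)) :
    ∀ y, μ * Metric.infDist y {y' | h y' = hstar} ≤ ‖gradient h y‖ := by
  intro y
  set L : ℝ := max l 0 with hL_def
  have hL : 0 ≤ L := le_max_right _ _
  have hlipL : ∀ y1 y2, ‖gradient h y1 - gradient h y2‖ ≤ L * ‖y1 - y2‖ := fun y1 y2 =>
    (hlip y1 y2).trans (mul_le_mul_of_nonneg_right (le_max_left _ _) (norm_nonneg _))
  have key := fun (η : ℝ) (h1 : 0 < η) (h2 : L * η < 1) (h3 : 2 * μ * η ≤ 1) =>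
    aux_key_PL h hstar L μ hμ hL hdiff hlipL hmax hPL y η h1 h2 h3
  set A := μ * Metric.infDist y {y' | h y' = hstar} with hA_def
  set B := ‖gradient h y‖ with hB_def
  have hA0 : 0 ≤ A := mul_nonneg hμ.le Metric.infDist_nonneg
  have hB0 : 0 ≤ B := norm_nonneg _
  by_contra hcon
  push_neg at hcon
  set η : ℝ := min ((A - B) / (2 * (L * A + 1))) (1 / (2 * μ)) with hη_def
  have hAB : 0 < A - B := by linarith
  have hden : 0 < 2 * (L * A + 1) := by nlinarith
  have hη0 : 0 < η := lt_min (by positivity) (by positivity)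
  have hη_le1 : η ≤ (A - B) / (2 * (L * A + 1)) := min_le_left _ _
  have hη_le2 : η ≤ 1 / (2 * μ) := min_le_right _ _
  have hη3 : 2 * μ * η ≤ 1 := by
    rw [le_div_iff₀ (by linarith : (0:ℝ) < 2 * μ)] at hη_le2
    linarith
  have hη1' : η * (2 * (L * A + 1)) ≤ A - B := by
    rw [le_div_iff₀ hden] at hη_le1
    exact hη_le1
  have hη2 : L * η < 1 := by nlinarith [mul_nonneg hL hA0, mul_nonneg (mul_nonneg hL hA0) hη0.le]
  have hkey := key η hη0 hη2 hη3
  nlinarith [mul_nonneg (mul_nonneg hL hA0) hη0.le, hη0]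
end

section
/- Let f : ℝ^{d1} × ℝ^{d2} → ℝ be differentiable with l-Lipschitz gradients, suppose that for every x the maximum Φ(x) = max_y f(x,y) is attained and finite, and that f satisfies the PL condition in y with constant μ > 0: ‖∇_y f(x,y)‖² ≥ 2μ (max_{y'} f(x,y') − f(x,y)) for all x,y. Assume moreover that Φ is differentiable with ∇Φ(x) = ∇_x f(x, y') for every maximizer y' ∈ argmax_y f(x,y). Then for all x and y, ‖∇_x f(x,y) − ∇Φ(x)‖² ≤ κ² ‖∇_y f(x,y)‖², where κ = l/μ. -/
open InnerProductSpace Filter Topology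

/-- Crude Taylor bound for a function with Lipschitz gradient. -/
lemma taylor_lb {E : Type*} [NormedAddCommGroup E] [InnerProductSpace ℝ E] [CompleteSpace E]
    (h : E → ℝ) (hd : Differentiable ℝ h) {l : ℝ} (hl : 0 ≤ l)
    (hlip : ∀ z1 z2, ‖gradient h z1 - gradient h z2‖ ≤ l * ‖z1 - z2‖)
    (a b : E) :
    h a + inner ℝ (gradient h a) (b - a) - l * ‖b - a‖ ^ 2 ≤ h b := by
  set g := gradient h a with hg
  set L : E →L[ℝ] ℝ := (toDual ℝ E g : E →L[ℝ] ℝ) with hL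
  set φ : E → ℝ := fun z => h z - L z with hφ
  have hfd : ∀ z, fderiv ℝ h z = (toDual ℝ E (gradient h z) : E →L[ℝ] ℝ) := by
    intro z
    exact ((hd z).hasGradientAt.hasFDerivAt).fderiv
  have hφdiff : ∀ z, DifferentiableAt ℝ φ z := fun z => ((hd z).sub (L.differentiableAt))
  have hfdφ : ∀ z, fderiv ℝ φ z = fderiv ℝ h z - L := by
    intro z
    rw [hφ]
    rw [fderiv_fun_sub (hd z) L.differentiableAt, L.fderiv]
  have key : ∀ z ∈ segment ℝ a b, ‖fderiv ℝ φ z‖ ≤ l * ‖b - a‖ := by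
    rintro z hz
    rw [hfdφ z, hfd z, hL]
    have : (toDual ℝ E (gradient h z) : E →L[ℝ] ℝ) - (toDual ℝ E g : E →L[ℝ] ℝ)
        = (toDual ℝ E (gradient h z - g) : E →L[ℝ] ℝ) := by
      rw [map_sub]
    rw [this]
    have hn : ‖(toDual ℝ E (gradient h z - g) : E →L[ℝ] ℝ)‖ = ‖gradient h z - g‖ :=
      (toDual ℝ E).norm_map _
    rw [hn]
    obtain ⟨u, v, hu, hv, huv, rfl⟩ := hz
    have hza : u • a + v • b - a = v • (b - a) := by
      have : u = 1 - v := by linarith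
      rw [this]; module
    calc ‖gradient h (u • a + v • b) - g‖ ≤ l * ‖u • a + v • b - a‖ := hlip _ _
      _ = l * (v * ‖b - a‖) := by rw [hza, norm_smul, Real.norm_of_nonneg hv]
      _ ≤ l * (1 * ‖b - a‖) := by
          apply mul_le_mul_of_nonneg_left _ hl
          apply mul_le_mul_of_nonneg_right _ (norm_nonneg _)
          linarith
      _ = l * ‖b - a‖ := by ring
  have := Convex.norm_image_sub_le_of_norm_fderiv_le (fun z _ => hφdiff z) key
    (convex_segment a b) (left_mem_segment ℝ a b) (right_mem_segment ℝ a b)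
  have habs : |φ b - φ a| ≤ l * ‖b - a‖ ^ 2 := by
    rw [Real.norm_eq_abs] at this
    calc |φ b - φ a| ≤ l * ‖b - a‖ * ‖b - a‖ := this
      _ = l * ‖b - a‖ ^ 2 := by ring
  have hφab : φ b - φ a = h b - h a - inner ℝ g (b - a) := by
    simp only [hφ, hL, toDual_apply_apply]
    have : (inner ℝ g b : ℝ) - inner ℝ g a = inner ℝ g (b - a) := by
      rw [inner_sub_right]
    linarith
  rw [hφab] at habs
  have := abs_le.mp habs
  linarith [this.1]
lemma step_len_aux {E : Type*} [NormedAddCommGroup E] [InnerProductSpace ℝ E] [CompleteSpace E]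
    (h : E → ℝ) {η c K M μ : ℝ} (hη0 : 0 < η) (hcpos : 0 < c) (hμ : 0 < μ)
    (hK : K = 2 / (c * Real.sqrt (2 * μ)))
    (hub : ∀ w, h w ≤ M) (hPL : ∀ w, 2 * μ * (M - h w) ≤ ‖gradient h w‖ ^ 2)
    (ascent : ∀ w, h w + η * c * ‖gradient h w‖ ^ 2 ≤ h (w + η • gradient h w))
    (z : E) :
    η * ‖gradient h z‖ ≤
      K * (Real.sqrt (M - h z) - Real.sqrt (M - h (z + η • gradient h z))) := by
  have hsq : 0 < Real.sqrt (2 * μ) := Real.sqrt_pos.mpr (by positivity)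
  have hK0 : 0 < K := by rw [hK]; positivity
  have hasc := ascent z
  have hd1 : 0 ≤ M - h z := sub_nonneg.mpr (hub z)
  have hd2 : 0 ≤ M - h (z + η • gradient h z) := sub_nonneg.mpr (hub _)
  have hstep : M - h (z + η • gradient h z) ≤ M - h z - η * c * ‖gradient h z‖ ^ 2 := by
    linarith
  have hmono : M - h (z + η • gradient h z) ≤ M - h z := by
    nlinarith [sq_nonneg ‖gradient h z‖, mul_pos hη0 hcpos]
  have hs2 : Real.sqrt (M - h z) ^ 2 = M - h z := Real.sq_sqrt hd1
  have ht2 : Real.sqrt (M - h (z + η • gradient h z)) ^ 2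
      = M - h (z + η • gradient h z) := Real.sq_sqrt hd2
  have hts : Real.sqrt (M - h (z + η • gradient h z)) ≤ Real.sqrt (M - h z) :=
    Real.sqrt_le_sqrt hmono
  have hPLn : Real.sqrt (2 * μ) * Real.sqrt (M - h z) ≤ ‖gradient h z‖ := by
    have h1 : Real.sqrt (2 * μ * (M - h z)) ≤ Real.sqrt (‖gradient h z‖ ^ 2) :=
      Real.sqrt_le_sqrt (hPL z)
    rwa [Real.sqrt_sq (norm_nonneg _), Real.sqrt_mul (by positivity)] at h1
  set G := ‖gradient h z‖ with hG
  set s := Real.sqrt (M - h z) with hs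
  set t := Real.sqrt (M - h (z + η • gradient h z)) with ht
  have hG0 : 0 ≤ G := norm_nonneg _
  have ht0 : 0 ≤ t := Real.sqrt_nonneg _
  by_cases hgz : G = 0
  · have hδn0 : M - h z = 0 := by nlinarith [hPL z]
    have hδn1 : M - h (z + η • gradient h z) = 0 := le_antisymm (by linarith) hd2
    rw [hgz, hs, ht, hδn0, hδn1]
    simp
  · have hgpos : 0 < G := lt_of_le_of_ne hG0 (Ne.symm hgz)
    have hspos : 0 < s := by
      have hδpos : 0 < M - h z := by
        by_contra hcon
        push_neg at hcon
        nlinarith [mul_pos (mul_pos hη0 hcpos) (pow_pos hgpos 2)]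
      exact Real.sqrt_pos.mpr hδpos
    rw [hK, div_mul_eq_mul_div, le_div_iff₀ (by positivity)]
    have key : η * c * G ^ 2 ≤ s ^ 2 - t ^ 2 := by
      rw [hs2, ht2]; linarith
    nlinarith [mul_le_mul_of_nonneg_left hPLn (by positivity : (0:ℝ) ≤ η * c * G), key,
      hspos, hts, ht0]

set_option maxHeartbeats 1000000 in
lemma pl_error_bound {E : Type*} [NormedAddCommGroup E] [InnerProductSpace ℝ E] [CompleteSpace E]
    (h : E → ℝ) (hd : Differentiable ℝ h) {l μ M η : ℝ} (hl : 0 < l) (hμ : 0 < μ)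
    (hlip : ∀ z1 z2, ‖gradient h z1 - gradient h z2‖ ≤ l * ‖z1 - z2‖)
    (hub : ∀ z, h z ≤ M)
    (hPL : ∀ z, 2 * μ * (M - h z) ≤ ‖gradient h z‖ ^ 2)
    (hη0 : 0 < η) (hη1 : η < 1 / (2 * l)) (hη2 : η < 1 / (2 * μ)) (y : E) :
    ∃ z, h z = M ∧ (1 - l * η) * ‖y - z‖ ≤ ‖gradient h y‖ / μ := by
  have hηl : η * (2 * l) < 1 := (lt_div_iff₀ (by positivity)).mp hη1
  have hημ : η * (2 * μ) < 1 := (lt_div_iff₀ (by positivity)).mp hη2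
  set c : ℝ := 1 - l * η with hc
  have hc1 : c ≤ 1 := by nlinarith
  have hcpos : 0 < c := by nlinarith
  set T : E → E := fun z => z + η • gradient h z with hT
  set Y : ℕ → E := fun n => T^[n] y with hY
  have hYsucc : ∀ n, Y (n + 1) = T (Y n) := fun n => Function.iterate_succ_apply' T n y
  have hY0 : Y 0 = y := rfl
  set δ : ℕ → ℝ := fun n => M - h (Y n) with hδ
  have hδ0 : ∀ n, 0 ≤ δ n := fun n => by simp only [hδ]; linarith [hub (Y n)]
  have ascent : ∀ z, h z + η * c * ‖gradient h z‖ ^ 2 ≤ h (T z) := by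
    intro z
    have htl := taylor_lb h hd hl.le hlip z (T z)
    have hTz : T z - z = η • gradient h z := by simp [hT]
    rw [hTz] at htl
    have hi : (inner ℝ (gradient h z) (η • gradient h z) : ℝ) = η * ‖gradient h z‖ ^ 2 := by
      rw [real_inner_smul_right, real_inner_self_eq_norm_sq]
    have hn : ‖η • gradient h z‖ ^ 2 = η ^ 2 * ‖gradient h z‖ ^ 2 := by
      rw [norm_smul, Real.norm_of_nonneg hη0.le]; ring
    rw [hi, hn] at htl
    nlinarith [htl]
  have hstep_delta : ∀ n, δ (n + 1) ≤ δ n - η * c * ‖gradient h (Y n)‖ ^ 2 := by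
    intro n
    have := ascent (Y n)
    rw [← hYsucc n] at this
    simp only [hδ]
    linarith
  have hδmono : ∀ n, δ (n + 1) ≤ δ n := by
    intro n
    have h1 := hstep_delta n
    nlinarith [sq_nonneg ‖gradient h (Y n)‖, mul_pos hη0 hcpos]
  set r : ℝ := 1 - 2 * μ * η * c with hr
  have hr0 : 0 ≤ r := by nlinarith
  have hr1 : r < 1 := by nlinarith [mul_pos (mul_pos hμ hη0) hcpos]
  have hPLδ : ∀ n, 2 * μ * δ n ≤ ‖gradient h (Y n)‖ ^ 2 := fun n => hPL (Y n)
  have hcontract : ∀ n, δ (n + 1) ≤ r * δ n := by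
    intro n
    have h1 := hstep_delta n
    have h2 := hPLδ n
    have hec : (0:ℝ) ≤ η * c := by positivity
    rw [hr]
    nlinarith [mul_le_mul_of_nonneg_left h2 hec]
  have hgeo : ∀ n, δ n ≤ r ^ n * δ 0 := by
    intro n
    induction n with
    | zero => simp
    | succ n ih =>
      calc δ (n + 1) ≤ r * δ n := hcontract n
        _ ≤ r * (r ^ n * δ 0) := by nlinarith
        _ = r ^ (n + 1) * δ 0 := by ring
  have hsq : 0 < Real.sqrt (2 * μ) := Real.sqrt_pos.mpr (by positivity)
  set K : ℝ := 2 / (c * Real.sqrt (2 * μ)) with hK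
  have hK0 : 0 < K := by positivity
  have hPLsqrt : ∀ n, Real.sqrt (2 * μ) * Real.sqrt (δ n) ≤ ‖gradient h (Y n)‖ := by
    intro n
    have h1 : Real.sqrt (2 * μ * δ n) ≤ Real.sqrt (‖gradient h (Y n)‖ ^ 2) :=
      Real.sqrt_le_sqrt (hPL (Y n))
    rwa [Real.sqrt_sq (norm_nonneg _), Real.sqrt_mul (by positivity)] at h1
  have hstep_len : ∀ n, ‖Y (n + 1) - Y n‖ ≤ K * (Real.sqrt (δ n) - Real.sqrt (δ (n + 1))) := by
    intro n
    have e2 : Y (n + 1) = Y n + η • gradient h (Y n) := by rw [hYsucc n]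
    simp only [hδ]
    rw [e2, add_sub_cancel_left, norm_smul, Real.norm_of_nonneg hη0.le]
    exact step_len_aux h hη0 hcpos hμ hK hub hPL (fun w => ascent w) (Y n)
  have htel : ∀ n m, ‖Y (n + m) - Y n‖ ≤ K * (Real.sqrt (δ n) - Real.sqrt (δ (n + m))) := by
    intro n m
    induction m with
    | zero => simp
    | succ m ih =>
      have h1 := hstep_len (n + m)
      calc ‖Y (n + (m + 1)) - Y n‖
          = ‖(Y (n + m + 1) - Y (n + m)) + (Y (n + m) - Y n)‖ := by
            rw [show n + (m + 1) = n + m + 1 from rfl]; congr 1; abel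
        _ ≤ ‖Y (n + m + 1) - Y (n + m)‖ + ‖Y (n + m) - Y n‖ := norm_add_le _ _
        _ ≤ K * (Real.sqrt (δ (n + m)) - Real.sqrt (δ (n + m + 1)))
              + K * (Real.sqrt (δ n) - Real.sqrt (δ (n + m))) := add_le_add h1 ih
        _ = K * (Real.sqrt (δ n) - Real.sqrt (δ (n + (m + 1)))) := by
            rw [show n + (m + 1) = n + m + 1 from rfl]; ring
  have hsqpow : ∀ n : ℕ, Real.sqrt (r ^ n) = (Real.sqrt r) ^ n := by
    intro n
    induction n with
    | zero => simp
    | succ n ih => rw [pow_succ, pow_succ, Real.sqrt_mul (pow_nonneg hr0 n), ih]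
  have hcauchy : CauchySeq Y := by
    apply cauchySeq_of_le_geometric (Real.sqrt r) (K * Real.sqrt (δ 0))
      ((Real.sqrt_lt' one_pos).mpr (by nlinarith))
    intro n
    rw [dist_eq_norm, norm_sub_rev]
    calc ‖Y (n + 1) - Y n‖ ≤ K * (Real.sqrt (δ n) - Real.sqrt (δ (n + 1))) := hstep_len n
      _ ≤ K * Real.sqrt (δ n) := by
          apply mul_le_mul_of_nonneg_left _ hK0.le
          linarith [Real.sqrt_nonneg (δ (n + 1))]
      _ ≤ K * Real.sqrt (r ^ n * δ 0) :=
          mul_le_mul_of_nonneg_left (Real.sqrt_le_sqrt (hgeo n)) hK0.le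
      _ = K * Real.sqrt (δ 0) * Real.sqrt r ^ n := by
          rw [Real.sqrt_mul (pow_nonneg hr0 n), hsqpow n]; ring
  obtain ⟨z, hz⟩ := cauchySeq_tendsto_of_complete hcauchy
  have hδlim : Tendsto δ atTop (𝓝 0) := by
    apply squeeze_zero hδ0 hgeo
    have := (tendsto_pow_atTop_nhds_zero_of_lt_one hr0 hr1).mul_const (δ 0)
    simpa using this
  have hhz : h z = M := by
    have h1 : Tendsto (fun n => h (Y n)) atTop (𝓝 (h z)) := (hd.continuous.tendsto z).comp hz
    have h2 : Tendsto (fun n => h (Y n)) atTop (𝓝 M) := by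
      have heq : (fun n => h (Y n)) = fun n => M - δ n := by
        funext n; simp only [hδ]; ring
      rw [heq]
      simpa using tendsto_const_nhds.sub hδlim
    exact tendsto_nhds_unique h1 h2
  have hdist : ‖y - z‖ ≤ K * Real.sqrt (δ 0) := by
    have h1 : ∀ m, ‖Y m - y‖ ≤ K * Real.sqrt (δ 0) := by
      intro m
      have h2 := htel 0 m
      rw [zero_add, hY0] at h2
      calc ‖Y m - y‖ ≤ K * (Real.sqrt (δ 0) - Real.sqrt (δ m)) := h2
        _ ≤ K * Real.sqrt (δ 0) := by nlinarith [Real.sqrt_nonneg (δ m), hK0]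
    have h2 : Tendsto (fun m => ‖Y m - y‖) atTop (𝓝 ‖z - y‖) := ((hz.sub_const y).norm)
    have h3 := le_of_tendsto h2 (Filter.Eventually.of_forall h1)
    rwa [norm_sub_rev] at h3
  refine ⟨z, hhz, ?_⟩
  have hδ0b : Real.sqrt (δ 0) ≤ ‖gradient h y‖ / Real.sqrt (2 * μ) := by
    have h1 := hPLsqrt 0
    rw [hY0] at h1
    rw [le_div_iff₀ hsq]
    linarith [h1, mul_comm (Real.sqrt (δ 0)) (Real.sqrt (2 * μ))]
  have hmul : Real.sqrt (2 * μ) * Real.sqrt (2 * μ) = 2 * μ :=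
    Real.mul_self_sqrt (by positivity)
  have hfin : c * (K * (‖gradient h y‖ / Real.sqrt (2 * μ))) = ‖gradient h y‖ / μ := by
    have hcne : c ≠ 0 := ne_of_gt hcpos
    have e : c * Real.sqrt (2 * μ) * Real.sqrt (2 * μ) = c * (2 * μ) := by
      rw [mul_assoc, hmul]
    rw [hK, div_mul_div_comm, e, mul_div_assoc', mul_div_mul_left _ _ hcne,
      mul_div_mul_left _ _ (two_ne_zero)]
  calc (1 - l * η) * ‖y - z‖ = c * ‖y - z‖ := by rw [hc]
    _ ≤ c * (K * Real.sqrt (δ 0)) :=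
        mul_le_mul_of_nonneg_left hdist hcpos.le
    _ ≤ c * (K * (‖gradient h y‖ / Real.sqrt (2 * μ))) :=
        mul_le_mul_of_nonneg_left (mul_le_mul_of_nonneg_left hδ0b hK0.le) hcpos.le
    _ = ‖gradient h y‖ / μ := hfin

open MeasureTheory Metric

/-- Gradient of `f` with respect to the first block of variables. -/
noncomputable def gradx {d1 d2 : ℕ}
    (f : EuclideanSpace ℝ (Fin d1) → EuclideanSpace ℝ (Fin d2) → ℝ)
    (x : EuclideanSpace ℝ (Fin d1)) (y : EuclideanSpace ℝ (Fin d2)) :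
    EuclideanSpace ℝ (Fin d1) :=
  gradient (fun x' => f x' y) x

/-- Gradient of `f` with respect to the second block of variables. -/
noncomputable def grady {d1 d2 : ℕ}
    (f : EuclideanSpace ℝ (Fin d1) → EuclideanSpace ℝ (Fin d2) → ℝ)
    (x : EuclideanSpace ℝ (Fin d1)) (y : EuclideanSpace ℝ (Fin d2)) :
    EuclideanSpace ℝ (Fin d2) :=
  gradient (fun y' => f x y') y

/-- Under the PL condition in `y` with constant `μ > 0`, for `f` with `l`-Lipschitz gradients,
`‖∇ₓ f(x,y) − ∇Φ(x)‖² ≤ κ² ‖∇_y f(x,y)‖²` with `κ = l/μ`. -/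
theorem gradient_gap_bound {d1 d2 : ℕ}
    (f : EuclideanSpace ℝ (Fin d1) → EuclideanSpace ℝ (Fin d2) → ℝ)
    (Φ : EuclideanSpace ℝ (Fin d1) → ℝ) (l μ : ℝ) (hμ : 0 < μ)
    (hdiff : Differentiable ℝ (fun p : EuclideanSpace ℝ (Fin d1) × EuclideanSpace ℝ (Fin d2) =>
      f p.1 p.2))
    (hlipx : ∀ x1 y1 x2 y2, ‖gradx f x1 y1 - gradx f x2 y2‖ ≤ l * (‖x1 - x2‖ + ‖y1 - y2‖))
    (hlipy : ∀ x1 y1 x2 y2, ‖grady f x1 y1 - grady f x2 y2‖ ≤ l * (‖x1 - x2‖ + ‖y1 - y2‖))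
    (hmax : ∀ x, IsGreatest (Set.range (f x)) (Φ x))
    (hPL : ∀ x y, ‖grady f x y‖ ^ 2 ≥ 2 * μ * (Φ x - f x y))
    (hΦdiff : Differentiable ℝ Φ)
    (hΦgrad : ∀ x ystar, f x ystar = Φ x → gradient Φ x = gradx f x ystar) :
    ∀ x y, ‖gradx f x y - gradient Φ x‖ ^ 2 ≤ (l / μ) ^ 2 * ‖grady f x y‖ ^ 2 := by
  intro x y
  by_cases hlpos : 0 < l
  swap
  · push_neg at hlpos
    obtain ⟨ys, hys⟩ := (hmax x).1
    have hEq : gradx f x y = gradient Φ x := by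
      rw [hΦgrad x ys hys]
      have h1 := hlipx x y x ys
      have h2 : l * (‖x - x‖ + ‖y - ys‖) ≤ 0 :=
        mul_nonpos_of_nonpos_of_nonneg hlpos (by positivity)
      have h3 : ‖gradx f x y - gradx f x ys‖ = 0 :=
        le_antisymm (by linarith) (norm_nonneg _)
      exact sub_eq_zero.mp (norm_eq_zero.mp h3)
    rw [hEq]
    simp only [sub_self, norm_zero]
    norm_num
    positivity
  · set h : EuclideanSpace ℝ (Fin d2) → ℝ := fun y' => f x y' with hh
    have hd : Differentiable ℝ h :=
      by have := hdiff.comp ((differentiable_const x).prodMk differentiable_id); exact this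
    have hlip : ∀ z1 z2, ‖gradient h z1 - gradient h z2‖ ≤ l * ‖z1 - z2‖ := by
      intro z1 z2
      have := hlipy x z1 x z2
      simp at this; exact this
    have hub : ∀ z, h z ≤ Φ x := fun z => (hmax x).2 ⟨z, rfl⟩
    have hPLh : ∀ z, 2 * μ * (Φ x - h z) ≤ ‖gradient h z‖ ^ 2 := fun z => hPL x z
    have hmpos : 0 < min (1 / (2 * l)) (1 / (2 * μ)) :=
      lt_min (by positivity) (by positivity)
    have key : ∀ η ∈ Set.Ioo (0:ℝ) (min (1 / (2 * l)) (1 / (2 * μ))),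
        (1 - l * η) * ‖gradx f x y - gradient Φ x‖ ≤ (l / μ) * ‖grady f x y‖ := by
      rintro η ⟨hη0, hηlt⟩
      obtain ⟨z, hz, hdist⟩ := pl_error_bound h hd hlpos hμ hlip hub hPLh hη0
        (lt_of_lt_of_le hηlt (min_le_left _ _)) (lt_of_lt_of_le hηlt (min_le_right _ _)) y
      have hgrad : gradient Φ x = gradx f x z := hΦgrad x z hz
      rw [hgrad]
      have h1 : ‖gradx f x y - gradx f x z‖ ≤ l * ‖y - z‖ := by
        have := hlipx x y x z
        simpa using this
      have hc0 : 0 ≤ 1 - l * η := by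
        have := (lt_div_iff₀ (by positivity : (0:ℝ) < 2 * l)).mp
          (lt_of_lt_of_le hηlt (min_le_left _ _))
        nlinarith
      calc (1 - l * η) * ‖gradx f x y - gradx f x z‖
          ≤ (1 - l * η) * (l * ‖y - z‖) := mul_le_mul_of_nonneg_left h1 hc0
        _ = l * ((1 - l * η) * ‖y - z‖) := by ring
        _ ≤ l * (‖gradient h y‖ / μ) := mul_le_mul_of_nonneg_left hdist hlpos.le
        _ = (l / μ) * ‖grady f x y‖ := by
            rw [show gradient h y = grady f x y from rfl]
            ring
    have hA : ‖gradx f x y - gradient Φ x‖ ≤ (l / μ) * ‖grady f x y‖ := by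
      have htend : Filter.Tendsto
          (fun η : ℝ => (1 - l * η) * ‖gradx f x y - gradient Φ x‖)
          (nhdsWithin 0 (Set.Ioi 0))
          (nhds ((1 - l * 0) * ‖gradx f x y - gradient Φ x‖)) :=
        Filter.Tendsto.mono_left
          (Continuous.tendsto (by continuity) 0) nhdsWithin_le_nhds
      rw [show (1 - l * 0) * ‖gradx f x y - gradient Φ x‖
          = ‖gradx f x y - gradient Φ x‖ by ring] at htend
      apply le_of_tendsto htend
      filter_upwards [Ioo_mem_nhdsGT_of_mem (Set.mem_Ico.mpr ⟨le_refl 0, hmpos⟩)] with η hη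
      exact key η hη
    calc ‖gradx f x y - gradient Φ x‖ ^ 2
        ≤ ((l / μ) * ‖grady f x y‖) ^ 2 := pow_le_pow_left₀ (norm_nonneg _) hA 2
      _ = (l / μ) ^ 2 * ‖grady f x y‖ ^ 2 := by rw [mul_pow]
end

section
/- Let f : ℝ^{d1} × ℝ^{d2} → ℝ be differentiable with l-Lipschitz gradients, satisfying the PL condition in y with constant μ > 0, with Φ(x) = max_y f(x,y) attained and finite for every x, and with Φ differentiable satisfying ∇Φ(x) = ∇_x f(x,y') for every maximizer y'. Then for all x and y, ‖∇_x f(x,y)‖² ≤ 2κ² ‖∇_y f(x,y)‖² + 2‖∇Φ(x)‖², where κ = l/μ. -/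
open MeasureTheory Metric

set_option maxHeartbeats 1000000

section AuxLemmas
open Filter
variable {E : Type*} [NormedAddCommGroup E] [InnerProductSpace ℝ E] [CompleteSpace E]

lemma aux_descent (u : E → ℝ) (hu : Differentiable ℝ u) (L : ℝ) (hL0 : 0 ≤ L)
    (hL : ∀ w₁ w₂, ‖gradient u w₁ - gradient u w₂‖ ≤ L * ‖w₁ - w₂‖) (y v : E) :
    u y + inner ℝ (gradient u y) v - L * ‖v‖ ^ 2 ≤ u (y + v) := by
  set g₀ := gradient u y with hg₀
  set h : E → ℝ := fun w => u w - inner ℝ g₀ w with hh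
  have hfd : ∀ w, HasFDerivAt h (innerSL ℝ (gradient u w) - innerSL ℝ g₀) w := by
    intro w
    have h1 : HasFDerivAt u (innerSL ℝ (gradient u w)) w := by
      have h0 := (hu w).hasGradientAt.hasFDerivAt
      exact h0.congr_fderiv (by ext z; simp [InnerProductSpace.toDual_apply_apply])
    exact h1.sub ((innerSL ℝ g₀).hasFDerivAt)
  have key : ‖h (y + v) - h y‖ ≤ (L * ‖v‖) * ‖(y + v) - y‖ := by
    apply (convex_closedBall y ‖v‖).norm_image_sub_le_of_norm_hasFDerivWithin_le
      (fun w _ => (hfd w).hasFDerivWithinAt)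
      (fun w hw => ?_) (mem_closedBall_self (norm_nonneg v)) (by simp [mem_closedBall, dist_eq_norm])
    have : innerSL ℝ (gradient u w) - innerSL ℝ g₀ = innerSL ℝ (gradient u w - g₀) := by
      ext z; simp [inner_sub_left]
    rw [this, innerSL_apply_norm]
    calc ‖gradient u w - g₀‖ ≤ L * ‖w - y‖ := hL w y
    _ ≤ L * ‖v‖ := by
        apply mul_le_mul_of_nonneg_left _ hL0
        simpa [mem_closedBall, dist_eq_norm] using hw
  have hsimp : h (y + v) - h y = u (y + v) - u y - inner ℝ g₀ v := by
    simp only [hh, inner_add_right]; ring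
  rw [hsimp, Real.norm_eq_abs] at key
  have : ‖(y + v) - y‖ = ‖v‖ := by simp
  rw [this] at key
  have := abs_le.mp key
  nlinarith [this.1, sq_abs ‖v‖]

lemma aux_EB (u : E → ℝ) (M : ℝ) (hu : Differentiable ℝ u) (l μ η : ℝ)
    (hl : 0 < l) (hμ : 0 < μ) (hη : 0 < η) (hηl : l * η ≤ 1/2) (hημ : μ * η ≤ 1/2)
    (hlip : ∀ w₁ w₂, ‖gradient u w₁ - gradient u w₂‖ ≤ l * ‖w₁ - w₂‖)
    (hub : ∀ w, u w ≤ M)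
    (hPL : ∀ w, ‖gradient u w‖ ^ 2 ≥ 2 * μ * (M - u w)) (y : E) :
    ∃ z, u z = M ∧ ‖y - z‖ ≤ ‖gradient u y‖ / (μ * (1 - l * η)) := by
  obtain ⟨Y, hY0, hYs⟩ : ∃ Y : ℕ → E, Y 0 = y ∧
      ∀ k, Y (k+1) = Y k + η • gradient u (Y k) :=
    ⟨fun n => Nat.rec y (fun _ w => w + η • gradient u w) n, rfl, fun k => rfl⟩
  obtain ⟨D, hD⟩ : ∃ D : ℕ → ℝ, ∀ k, D k = M - u (Y k) := ⟨_, fun _ => rfl⟩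
  obtain ⟨G, hG⟩ : ∃ G : ℕ → ℝ, ∀ k, G k = ‖gradient u (Y k)‖ := ⟨_, fun _ => rfl⟩
  obtain ⟨sD, hsDdef⟩ : ∃ sD : ℕ → ℝ, ∀ k, sD k = Real.sqrt (D k) := ⟨_, fun _ => rfl⟩
  have h1lη : (1:ℝ)/2 ≤ 1 - l * η := by linarith
  have hc : 0 < η * (1 - l * η) := mul_pos hη (by linarith)
  have ht : 0 < Real.sqrt (2 * μ) := Real.sqrt_pos.mpr (by linarith)
  set t := Real.sqrt (2 * μ) with hts
  have ht2 : t ^ 2 = 2 * μ := Real.sq_sqrt (by linarith)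
  have hGnn : ∀ k, 0 ≤ G k := fun k => (hG k) ▸ norm_nonneg _
  have hstep : ∀ k, D (k + 1) ≤ D k - (η * (1 - l * η)) * G k ^ 2 := by
    intro k
    have h := aux_descent u hu l hl.le hlip (Y k) (η • gradient u (Y k))
    rw [← hYs k] at h
    have hi : inner ℝ (gradient u (Y k)) (η • gradient u (Y k)) = η * G k ^ 2 := by
      rw [real_inner_smul_right, real_inner_self_eq_norm_sq, hG]
    have hn : ‖η • gradient u (Y k)‖ ^ 2 = η ^ 2 * G k ^ 2 := by
      rw [norm_smul, Real.norm_eq_abs, mul_pow, sq_abs, hG]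
    rw [hi, hn] at h
    rw [hD, hD]
    nlinarith [h]
  have hD0 : ∀ k, 0 ≤ D k := fun k => by rw [hD]; linarith [hub (Y k)]
  have hPLk : ∀ k, 2 * μ * D k ≤ G k ^ 2 := fun k => by
    rw [hD, hG]; exact hPL (Y k)
  have hmono : ∀ k, D (k + 1) ≤ D k := by
    intro k
    nlinarith [hstep k, sq_nonneg (G k), hc.le]
  set ρ : ℝ := 1 - 2 * μ * (η * (1 - l * η)) with hρ
  have hρ0 : 0 ≤ ρ := by nlinarith
  have hρ1 : ρ < 1 := by nlinarith
  have hgeo1 : ∀ k, D (k + 1) ≤ ρ * D k := by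
    intro k
    nlinarith [hstep k, hPLk k]
  have hgeo : ∀ k, D k ≤ ρ ^ k * D 0 := by
    intro k
    induction k with
    | zero => simp
    | succ n ih =>
      calc D (n + 1) ≤ ρ * D n := hgeo1 n
      _ ≤ ρ * (ρ ^ n * D 0) := mul_le_mul_of_nonneg_left ih hρ0
      _ = ρ ^ (n + 1) * D 0 := by ring
  have hsq : ∀ k, sD k ^ 2 = D k := fun k => by rw [hsDdef]; exact Real.sq_sqrt (hD0 k)
  have hsnn : ∀ k, 0 ≤ sD k := fun k => (hsDdef k) ▸ Real.sqrt_nonneg _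
  have hsmono : ∀ k, sD (k + 1) ≤ sD k := fun k => by
    rw [hsDdef, hsDdef]; exact Real.sqrt_le_sqrt (hmono k)
  have htα : ∀ k, t * sD k ≤ G k := by
    intro k
    have h1 : (t * sD k) ^ 2 ≤ G k ^ 2 := by
      rw [mul_pow, ht2, hsq]; exact hPLk k
    nlinarith [hGnn k, mul_nonneg ht.le (hsnn k)]
  have key : ∀ k, η * G k * ((1 - l * η) * t) ≤ 2 * (sD k - sD (k + 1)) := by
    intro k
    have h1 : (η * (1 - l * η)) * G k ^ 2 ≤ sD k ^ 2 - sD (k + 1) ^ 2 := by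
      rw [hsq, hsq]; linarith [hstep k]
    rcases eq_or_lt_of_le (hsnn k) with h0 | h0
    · have hβ : sD (k + 1) = 0 := le_antisymm (h0 ▸ hsmono k) (hsnn (k+1))
      have h5 : G k ^ 2 ≤ 0 := by nlinarith [hc]
      have hGz : G k = 0 := le_antisymm (by nlinarith [hGnn k]) (hGnn k)
      rw [hGz, hβ, ← h0]; simp
    · have h2 := htα k
      have h3 : (η * (1 - l * η)) * (t * sD k) * G k ≤ 2 * sD k * (sD k - sD (k + 1)) := by
        nlinarith [hsmono k, hsnn (k + 1), hGnn k, mul_nonneg hc.le (hGnn k)]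
      nlinarith [h0, hGnn k]
  have hstepnorm : ∀ k, ‖Y (k + 1) - Y k‖ = η * G k := by
    intro k
    rw [hYs k, add_sub_cancel_left, norm_smul, Real.norm_eq_abs, abs_of_pos hη, hG]
  have hCpos : 0 < (1 - l * η) * t := mul_pos (by linarith) ht
  set r := Real.sqrt ρ with hr
  have hr1 : r < 1 := by
    rw [hr]; exact (Real.sqrt_lt' one_pos).mpr (by nlinarith)
  have hrnn : 0 ≤ r := Real.sqrt_nonneg _
  have hsgeo : ∀ k, sD k ≤ sD 0 * r ^ k := by
    intro k
    induction k with
    | zero => simp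
    | succ n ih =>
      have hstep' : sD (n + 1) ≤ r * sD n := by
        rw [hsDdef (n+1), hsDdef n, hr]
        calc Real.sqrt (D (n+1)) ≤ Real.sqrt (ρ * D n) := Real.sqrt_le_sqrt (hgeo1 n)
        _ = Real.sqrt ρ * Real.sqrt (D n) := Real.sqrt_mul hρ0 _
      calc sD (n + 1) ≤ r * sD n := hstep'
      _ ≤ r * (sD 0 * r ^ n) := mul_le_mul_of_nonneg_left ih hrnn
      _ = sD 0 * r ^ (n + 1) := by ring
  have hcauchy : CauchySeq Y := by
    apply cauchySeq_of_le_geometric r (2 / ((1 - l * η) * t) * sD 0) hr1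
    intro n
    rw [dist_eq_norm, norm_sub_rev, hstepnorm n]
    have h1 : η * G n ≤ 2 / ((1 - l * η) * t) * (sD n - sD (n + 1)) := by
      rw [div_mul_eq_mul_div, le_div_iff₀ hCpos]
      linarith [key n]
    calc η * G n ≤ 2 / ((1 - l * η) * t) * (sD n - sD (n + 1)) := h1
    _ ≤ 2 / ((1 - l * η) * t) * sD n := by
        apply mul_le_mul_of_nonneg_left _ (by positivity)
        linarith [hsnn (n+1)]
    _ ≤ 2 / ((1 - l * η) * t) * (sD 0 * r ^ n) :=
        mul_le_mul_of_nonneg_left (hsgeo n) (by positivity)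
    _ = 2 / ((1 - l * η) * t) * sD 0 * r ^ n := by ring
  obtain ⟨z, hz⟩ := cauchySeq_tendsto_of_complete hcauchy
  refine ⟨z, ?_, ?_⟩
  · have hDlim : Tendsto D atTop (nhds 0) := by
      apply squeeze_zero hD0 hgeo
      have hpow : Tendsto (fun k : ℕ => ρ ^ k) atTop (nhds 0) :=
        tendsto_pow_atTop_nhds_zero_of_lt_one hρ0 hρ1
      simpa using hpow.mul_const (D 0)
    have h1 : Tendsto (fun k => u (Y k)) atTop (nhds (u z)) :=
      (hu.continuous.tendsto z).comp hz
    have h2 : Tendsto (fun k => u (Y k)) atTop (nhds M) := by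
      have heq : (fun k => u (Y k)) = fun k => M - D k := by
        funext k; rw [hD]; ring
      rw [heq]
      simpa using (tendsto_const_nhds (x := M)).sub hDlim
    exact tendsto_nhds_unique h1 h2
  · have hpart : ∀ n, ‖y - Y n‖ * ((1 - l * η) * t) ≤ 2 * (sD 0 - sD n) := by
      intro n
      induction n with
      | zero => rw [hY0]; simp
      | succ n ih =>
        have htri : ‖y - Y (n + 1)‖ ≤ ‖y - Y n‖ + ‖Y (n + 1) - Y n‖ := by
          have h := norm_sub_le_norm_sub_add_norm_sub y (Y n) (Y (n+1))
          rw [norm_sub_rev (Y n) (Y (n+1))] at h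
          exact h
        have h2 : ‖Y (n + 1) - Y n‖ * ((1 - l * η) * t) ≤ 2 * (sD n - sD (n + 1)) := by
          rw [hstepnorm n]; exact key n
        nlinarith [mul_le_mul_of_nonneg_right htri hCpos.le]
    have hbound : ∀ n, ‖y - Y n‖ * ((1 - l * η) * t) ≤ 2 * sD 0 := by
      intro n; linarith [hpart n, hsnn n]
    have hlim : ‖y - z‖ * ((1 - l * η) * t) ≤ 2 * sD 0 := by
      have h1 : Tendsto (fun n => ‖y - Y n‖ * ((1 - l * η) * t)) atTop
          (nhds (‖y - z‖ * ((1 - l * η) * t))) :=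
        (((continuous_const.sub continuous_id).norm.tendsto z).comp hz).mul_const _
      exact le_of_tendsto h1 (Eventually.of_forall hbound)
    have h2 : t * sD 0 ≤ G 0 := htα 0
    have hG0 : G 0 = ‖gradient u y‖ := by rw [hG, hY0]
    rw [hG0] at h2
    have h3 : ‖y - z‖ * ((1 - l * η) * t) * t ≤ 2 * sD 0 * t :=
      mul_le_mul_of_nonneg_right hlim ht.le
    have h4 : 2 * sD 0 * t ≤ 2 * ‖gradient u y‖ := by nlinarith [hsnn 0]
    rw [le_div_iff₀ (by positivity : (0:ℝ) < μ * (1 - l * η))]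
    have htt : t * t = 2 * μ := by rw [← sq]; exact ht2
    have h5 : ‖y - z‖ * ((1 - l * η) * t) * t = 2 * (‖y - z‖ * (μ * (1 - l * η))) := by
      linear_combination (‖y - z‖ * (1 - l * η)) * htt
    linarith [h3, h4, h5]

end AuxLemmas

/-- Under the PL condition in `y` with constant `μ > 0`, for `f` with `l`-Lipschitz gradients,
`‖∇ₓ f(x,y)‖² ≤ 2κ² ‖∇_y f(x,y)‖² + 2‖∇Φ(x)‖²` with `κ = l/μ`. -/
theorem gradient_x_norm_bound {d1 d2 : ℕ}
    (f : EuclideanSpace ℝ (Fin d1) → EuclideanSpace ℝ (Fin d2) → ℝ)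
    (Φ : EuclideanSpace ℝ (Fin d1) → ℝ) (l μ : ℝ) (hμ : 0 < μ)
    (hdiff : Differentiable ℝ (fun p : EuclideanSpace ℝ (Fin d1) × EuclideanSpace ℝ (Fin d2) =>
      f p.1 p.2))
    (hlipx : ∀ x1 y1 x2 y2, ‖gradx f x1 y1 - gradx f x2 y2‖ ≤ l * (‖x1 - x2‖ + ‖y1 - y2‖))
    (hlipy : ∀ x1 y1 x2 y2, ‖grady f x1 y1 - grady f x2 y2‖ ≤ l * (‖x1 - x2‖ + ‖y1 - y2‖))
    (hmax : ∀ x, IsGreatest (Set.range (f x)) (Φ x))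
    (hPL : ∀ x y, ‖grady f x y‖ ^ 2 ≥ 2 * μ * (Φ x - f x y))
    (hΦdiff : Differentiable ℝ Φ)
    (hΦgrad : ∀ x ystar, f x ystar = Φ x → gradient Φ x = gradx f x ystar) :
    ∀ x y, ‖gradx f x y‖ ^ 2 ≤ 2 * (l / μ) ^ 2 * ‖grady f x y‖ ^ 2 + 2 * ‖gradient Φ x‖ ^ 2 := by
  intro x y
  by_cases hl : 0 < l
  · -- main case
    set ng := ‖grady f x y‖ with hng
    have hngnn : 0 ≤ ng := norm_nonneg _
    have claim : ‖gradx f x y‖ ≤ ‖gradient Φ x‖ + l / μ * ng := by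
      by_contra hcon
      push_neg at hcon
      set ε := (‖gradx f x y‖ - (‖gradient Φ x‖ + l / μ * ng)) / 2 with hε
      have hεpos : 0 < ε := by simp only [hε]; linarith
      -- choose step size
      set η := min (1 / (2 * l)) (min (1 / (2 * μ)) (ε * μ / (2 * l ^ 2 * (ng + 1)))) with hη
      have hη0 : 0 < η := by
        apply lt_min (by positivity) (lt_min (by positivity) (by positivity))
      have hηl : l * η ≤ 1 / 2 := by
        have : η ≤ 1 / (2 * l) := min_le_left _ _
        rw [le_div_iff₀ (by positivity)] at this
        linarith
      have hημ : μ * η ≤ 1 / 2 := by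
        have : η ≤ 1 / (2 * μ) := le_trans (min_le_right _ _) (min_le_left _ _)
        rw [le_div_iff₀ (by positivity)] at this
        linarith
      have hηε : 2 * l ^ 2 * (ng + 1) * η ≤ ε * μ := by
        have : η ≤ ε * μ / (2 * l ^ 2 * (ng + 1)) :=
          le_trans (min_le_right _ _) (min_le_right _ _)
        rw [le_div_iff₀ (by positivity)] at this
        linarith
      -- apply the error bound lemma
      have hu : Differentiable ℝ (fun y' => f x y') :=
        by have := hdiff.comp ((differentiable_const x).prodMk differentiable_id); exact this
      have hlip' : ∀ w₁ w₂, ‖gradient (fun y' => f x y') w₁ -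
          gradient (fun y' => f x y') w₂‖ ≤ l * ‖w₁ - w₂‖ := by
        intro w₁ w₂
        have h := hlipy x w₁ x w₂
        simpa [grady] using h
      have hub : ∀ w, f x w ≤ Φ x := fun w => (hmax x).2 ⟨w, rfl⟩
      have hPL' : ∀ w, ‖gradient (fun y' => f x y') w‖ ^ 2 ≥ 2 * μ * (Φ x - f x w) :=
        fun w => hPL x w
      obtain ⟨z, hz1, hz2⟩ := aux_EB (fun y' => f x y') (Φ x) hu l μ η hl hμ hη0 hηl hημ
        hlip' hub hPL' y
      -- assemble
      have hgz : gradient Φ x = gradx f x z := hΦgrad x z hz1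
      have hlx : ‖gradx f x y - gradx f x z‖ ≤ l * ‖y - z‖ := by
        have h := hlipx x y x z
        simpa using h
      have htri : ‖gradx f x y‖ ≤ ‖gradient Φ x‖ + l * ‖y - z‖ := by
        calc ‖gradx f x y‖ = ‖(gradx f x y - gradx f x z) + gradx f x z‖ := by
              rw [sub_add_cancel]
        _ ≤ ‖gradx f x y - gradx f x z‖ + ‖gradx f x z‖ := norm_add_le _ _
        _ ≤ l * ‖y - z‖ + ‖gradient Φ x‖ := by rw [hgz]; linarith [hlx]
        _ = ‖gradient Φ x‖ + l * ‖y - z‖ := by ring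
      have hz2' : ‖y - z‖ ≤ ng / (μ * (1 - l * η)) := hz2
      have hfin : l * ‖y - z‖ ≤ l / μ * ng + ε := by
        have h1 : l * ‖y - z‖ ≤ l * (ng / (μ * (1 - l * η))) :=
          mul_le_mul_of_nonneg_left hz2' hl.le
        have hpos : 0 < μ * (1 - l * η) := by
          apply mul_pos hμ; linarith
        have h2 : l * (ng / (μ * (1 - l * η))) ≤ l / μ * ng + ε := by
          rw [mul_div_assoc', div_le_iff₀ hpos]
          have hexp : (l / μ * ng + ε) * (μ * (1 - l * η)) =
              l * ng * (1 - l * η) + ε * μ * (1 - l * η) := by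
            field_simp
          rw [hexp]
          nlinarith [mul_nonneg (mul_nonneg (sq_nonneg l) hngnn) hη0.le,
            mul_nonneg (sq_nonneg l) hη0.le, mul_pos hεpos hμ,
            mul_nonneg (mul_nonneg hεpos.le hμ.le) (mul_nonneg hl.le hη0.le)]
        linarith
      have : ‖gradx f x y‖ ≤ ‖gradient Φ x‖ + l / μ * ng + ε := by linarith
      simp only [hε] at this
      linarith
    have h1 : 0 ≤ ‖gradient Φ x‖ := norm_nonneg _
    have h2 : 0 ≤ l / μ * ng := by positivity
    nlinarith [sq_nonneg (‖gradient Φ x‖ - l / μ * ng), norm_nonneg (gradx f x y)]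
  · -- degenerate case : l ≤ 0
    push_neg at hl
    obtain ⟨ys, hys⟩ : ∃ ys, f x ys = Φ x := (hmax x).1
    have h := hlipx x y x ys
    have h0 : ‖gradx f x y - gradx f x ys‖ = 0 := by
      have hnn : 0 ≤ ‖gradx f x y - gradx f x ys‖ := norm_nonneg _
      have : l * (‖x - x‖ + ‖y - ys‖) ≤ 0 := by
        have : 0 ≤ ‖x - x‖ + ‖y - ys‖ := by positivity
        exact mul_nonpos_of_nonpos_of_nonneg hl this
      linarith
    have heq : gradx f x y = gradx f x ys := by
      rwa [norm_sub_eq_zero_iff] at h0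
    have hgz : gradient Φ x = gradx f x y := (hΦgrad x ys hys).trans heq.symm
    rw [hgz]
    have : 0 ≤ 2 * (l / μ) ^ 2 * ‖grady f x y‖ ^ 2 := by positivity
    nlinarith [sq_nonneg ‖gradx f x y‖]
end

section
/- Let f : ℝ^{d1} × ℝ^{d2} → ℝ be differentiable with l-Lipschitz gradients, and for μ1 > 0 define the smoothed function f_{μ1}(x,y) = E_{u ~ U(B_{d1})}[ f(x + μ1 u, y) ], where U(B_{d1}) is the uniform distribution over the unit Euclidean ball of ℝ^{d1}. Then for all x, y: ‖∇_x f_{μ1}(x,y) − ∇_x f(x,y)‖² ≤ μ1² d1² l² / 4. -/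
open MeasureTheory Metric Set
open scoped ENNReal

/-- The uniform probability distribution on the closed unit ball of `ℝ^d`. -/
noncomputable def uniformBall (d : ℕ) : Measure (EuclideanSpace ℝ (Fin d)) :=
  (volume (Metric.closedBall (0 : EuclideanSpace ℝ (Fin d)) 1))⁻¹ •
    volume.restrict (Metric.closedBall (0 : EuclideanSpace ℝ (Fin d)) 1)

lemma ub_vol_pos (d : ℕ) : 0 < volume (closedBall (0 : EuclideanSpace ℝ (Fin d)) 1) :=
  measure_closedBall_pos _ _ one_pos

lemma ub_vol_ne_top (d : ℕ) : volume (closedBall (0 : EuclideanSpace ℝ (Fin d)) 1) ≠ ⊤ :=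
  measure_closedBall_lt_top.ne

instance ub_prob (d : ℕ) : IsProbabilityMeasure (uniformBall d) := by
  constructor
  rw [uniformBall, Measure.smul_apply, Measure.restrict_apply MeasurableSet.univ,
    Set.univ_inter, smul_eq_mul, ENNReal.inv_mul_cancel (ub_vol_pos d).ne' (ub_vol_ne_top d)]

lemma ub_ae_norm_le (d : ℕ) : ∀ᵐ u ∂(uniformBall d), ‖u‖ ≤ 1 := by
  rw [uniformBall]
  refine Measure.ae_smul_measure ?_ _
  filter_upwards [ae_restrict_mem measurableSet_closedBall] with u hu
  simpa [mem_closedBall_zero_iff] using hu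

lemma ub_integrable {G : Type*} [NormedAddCommGroup G]
    {d : ℕ} {g : EuclideanSpace ℝ (Fin d) → G} (hg : Continuous g) :
    Integrable g (uniformBall d) := by
  rw [uniformBall]
  exact (hg.continuousOn.integrableOn_compact (isCompact_closedBall _ _)).smul_measure
    (ENNReal.inv_ne_top.mpr (ub_vol_pos d).ne')

lemma ub_integral_norm_le (d : ℕ) : ∫ u, ‖u‖ ∂(uniformBall d) ≤ (d : ℝ) / 2 := by
  rcases Nat.eq_zero_or_pos d with hd | hd
  · subst hd
    have : ∀ u : EuclideanSpace ℝ (Fin 0), ‖u‖ = 0 := fun u => by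
      rw [Subsingleton.elim u 0, norm_zero]
    simp [this]
  · haveI : Nonempty (Fin d) := ⟨⟨0, hd⟩⟩
    haveI : Nontrivial (EuclideanSpace ℝ (Fin d)) := inferInstance
    set E := EuclideanSpace ℝ (Fin d)
    set V : ℝ≥0∞ := volume (closedBall (0 : E) 1) with hV
    have hdim : Module.finrank ℝ E = d := finrank_euclideanSpace_fin
    set g : ℝ → ℝ := fun r => if r ≤ 1 then r else 0 with hg
    have step1 : ∫ u in closedBall (0 : E) 1, ‖u‖ ∂volume = ∫ u : E, g ‖u‖ ∂volume := by
      rw [← integral_indicator measurableSet_closedBall]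
      congr 1 with u
      by_cases h : ‖u‖ ≤ 1 <;>
        simp [Set.indicator, mem_closedBall_zero_iff, hg, h]
    have step2 := MeasureTheory.integral_fun_norm_addHaar (volume : Measure E) g
    have step3 : ∫ y in Ioi (0:ℝ), y ^ (Module.finrank ℝ E - 1) • g y
        = ∫ y in Ioc (0:ℝ) 1, y ^ d := by
      rw [← integral_indicator measurableSet_Ioi, ← integral_indicator measurableSet_Ioc]
      congr 1 with y
      by_cases h0 : 0 < y
      · by_cases h1 : y ≤ 1
        · have : y ^ (d - 1) * y = y ^ d := by
            rw [← pow_succ, Nat.sub_add_cancel hd]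
          simp [Set.indicator, h0, h1, hg, hdim, smul_eq_mul, this, h0.le, Set.mem_Ioc]
        · simp [Set.indicator, h0, h1, hg, hdim, Set.mem_Ioc, Set.mem_Ioi]
      · simp [Set.indicator, h0, Set.mem_Ioc, Set.mem_Ioi]
    have step4 : ∫ y in Ioc (0:ℝ) 1, y ^ d = 1 / (d + 1) := by
      rw [← intervalIntegral.integral_of_le zero_le_one, integral_pow]
      simp
    have hVball : volume (ball (0 : E) 1) = V :=
      ((volume : Measure E).addHaar_closedBall_eq_addHaar_ball 0 1).symm
    have hVpos : 0 < V.toReal :=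
      ENNReal.toReal_pos (ub_vol_pos d).ne' (ub_vol_ne_top d)
    have key : ∫ u in closedBall (0 : E) 1, ‖u‖ ∂volume = d * V.toReal * (1 / (d + 1)) := by
      rw [step1, step2, measureReal_def, hVball, step3, step4, hdim]
      simp [mul_assoc]
    rw [uniformBall, integral_smul_measure, ← hV, key, ENNReal.toReal_inv, smul_eq_mul]
    have : V.toReal⁻¹ * (↑d * V.toReal * (1 / (↑d + 1))) = (d : ℝ) / (d + 1) := by
      field_simp
    rw [this]
    have h1d : (1 : ℝ) ≤ d := by exact_mod_cast hd
    rw [div_le_div_iff₀ (by linarith) (by norm_num)]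
    nlinarith

/-- For `f` differentiable with `l`-Lipschitz gradients and the uniformly smoothed function
`f_{μ1}(x,y) = E_{u ~ U(B_{d1})}[f(x + μ1 u, y)]`, one has
`‖∇ₓ f_{μ1}(x,y) − ∇ₓ f(x,y)‖² ≤ μ1² d1² l² / 4`. -/
theorem smoothed_gradient_gap {d1 d2 : ℕ}
    (f : EuclideanSpace ℝ (Fin d1) → EuclideanSpace ℝ (Fin d2) → ℝ)
    (l μ1 : ℝ) (hμ1 : 0 < μ1)
    (hdiff : Differentiable ℝ (fun p : EuclideanSpace ℝ (Fin d1) × EuclideanSpace ℝ (Fin d2) =>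
      f p.1 p.2))
    (hlipx : ∀ x1 y1 x2 y2, ‖gradx f x1 y1 - gradx f x2 y2‖ ≤ l * (‖x1 - x2‖ + ‖y1 - y2‖))
    (hlipy : ∀ x1 y1 x2 y2,
      ‖gradient (fun y' => f x1 y') y1 - gradient (fun y' => f x2 y') y2‖ ≤
        l * (‖x1 - x2‖ + ‖y1 - y2‖)) :
    ∀ (x : EuclideanSpace ℝ (Fin d1)) (y : EuclideanSpace ℝ (Fin d2)),
      ‖gradient (fun x' => ∫ u, f (x' + μ1 • u) y ∂(uniformBall d1)) x - gradx f x y‖ ^ 2 ≤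
        μ1 ^ 2 * (d1 : ℝ) ^ 2 * l ^ 2 / 4 := by
  intro x y
  rcases Nat.eq_zero_or_pos d1 with h0 | hd
  · subst h0
    have hz : gradient (fun x' => ∫ u, f (x' + μ1 • u) y ∂(uniformBall 0)) x - gradx f x y
        = 0 := Subsingleton.elim _ _
    rw [hz, norm_zero]
    simp
  set ν := uniformBall d1 with hν
  -- l is nonnegative
  have hl0 : 0 ≤ l := by
    have h := hlipx (EuclideanSpace.single ⟨0, hd⟩ (1:ℝ)) y 0 y
    simp [EuclideanSpace.norm_single] at h
    have := (norm_nonneg (gradx f (EuclideanSpace.single ⟨0, hd⟩ (1:ℝ)) y - gradx f 0 y)).trans h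
    linarith
  -- differentiability of x' ↦ f x' y
  have hφ : Differentiable ℝ (fun x' : (EuclideanSpace ℝ (Fin d1)) => f x' y) := fun x' =>
    by have h2 : DifferentiableAt ℝ (fun z : EuclideanSpace ℝ (Fin d1) => (z, y)) x' := differentiableAt_id.prodMk (differentiableAt_const y); exact (hdiff (x', y)).comp x' h2
  have hφc : Continuous (fun x' : (EuclideanSpace ℝ (Fin d1)) => f x' y) := hφ.continuous
  -- Lipschitz estimate for gradx in the first variable
  have hgl : ∀ a b : (EuclideanSpace ℝ (Fin d1)), ‖gradx f a y - gradx f b y‖ ≤ l * ‖a - b‖ := fun a b => by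
    simpa using hlipx a y b y
  -- continuity of the gradient map
  have hcontG : ∀ x' : (EuclideanSpace ℝ (Fin d1)), Continuous fun u : (EuclideanSpace ℝ (Fin d1)) => gradx f (x' + μ1 • u) y := by
    intro x'
    refine (LipschitzWith.of_dist_le_mul (K := Real.toNNReal (l * μ1)) ?_).continuous
    intro u v
    rw [dist_eq_norm, dist_eq_norm, Real.coe_toNNReal _ (mul_nonneg hl0 hμ1.le)]
    calc ‖gradx f (x' + μ1 • u) y - gradx f (x' + μ1 • v) y‖
        ≤ l * ‖(x' + μ1 • u) - (x' + μ1 • v)‖ := hgl _ _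
      _ = l * μ1 * ‖u - v‖ := by
          rw [add_sub_add_left_eq_sub, ← smul_sub, norm_smul, Real.norm_eq_abs,
            abs_of_pos hμ1, mul_assoc]
  -- the derivative candidate
  set F' : (EuclideanSpace ℝ (Fin d1)) → (EuclideanSpace ℝ (Fin d1)) → ((EuclideanSpace ℝ (Fin d1)) →L[ℝ] ℝ) :=
    fun x' u => (InnerProductSpace.toDual ℝ (EuclideanSpace ℝ (Fin d1))) (gradx f (x' + μ1 • u) y) with hF'
  have hFd : ∀ (x' u : (EuclideanSpace ℝ (Fin d1))), HasFDerivAt (fun z => f (z + μ1 • u) y) (F' x' u) x' := by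
    intro x' u
    have h1 : HasFDerivAt (fun z : (EuclideanSpace ℝ (Fin d1)) => f z y)
        ((InnerProductSpace.toDual ℝ (EuclideanSpace ℝ (Fin d1))) (gradx f (x' + μ1 • u) y)) (x' + μ1 • u) :=
      (hφ (x' + μ1 • u)).hasGradientAt.hasFDerivAt
    have h2 : HasFDerivAt (fun z : (EuclideanSpace ℝ (Fin d1)) => z + μ1 • u)
        (ContinuousLinearMap.id ℝ (EuclideanSpace ℝ (Fin d1))) x' := (hasFDerivAt_id x').add_const (μ1 • u)
    have := h1.comp x' h2
    rwa [ContinuousLinearMap.comp_id] at this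
  -- differentiation under the integral sign
  have hmain : HasFDerivAt (fun x' => ∫ u, f (x' + μ1 • u) y ∂ν) (∫ u, F' x u ∂ν) x := by
    refine hasFDerivAt_integral_of_dominated_of_fderiv_le (ball_mem_nhds x one_pos)
      (Filter.Eventually.of_forall fun x' =>
        ((hφc.comp (continuous_const.add (continuous_id.const_smul μ1))).aestronglyMeasurable))
      (ub_integrable (hφc.comp (continuous_const.add (continuous_id.const_smul μ1))))
      ((((InnerProductSpace.toDual ℝ (EuclideanSpace ℝ (Fin d1))).continuous).comp (hcontG x)).aestronglyMeasurable)
      ?_ (integrable_const (‖gradx f x y‖ + l * (1 + μ1)))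
      (Filter.Eventually.of_forall fun u x' _ => hFd x' u)
    filter_upwards [ub_ae_norm_le d1] with u hu
    intro x' hx'
    have hnorm : ‖F' x' u‖ = ‖gradx f (x' + μ1 • u) y‖ := by
      rw [hF']
      exact (InnerProductSpace.toDual ℝ (EuclideanSpace ℝ (Fin d1))).norm_map _
    rw [hnorm]
    have h1 : ‖gradx f (x' + μ1 • u) y‖
        ≤ ‖gradx f x y‖ + ‖gradx f (x' + μ1 • u) y - gradx f x y‖ := by
      have := norm_sub_norm_le (gradx f (x' + μ1 • u) y) (gradx f x y)
      linarith
    have h2 : ‖gradx f (x' + μ1 • u) y - gradx f x y‖ ≤ l * (1 + μ1) := by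
      refine (hgl _ _).trans ?_
      have h3 : ‖x' + μ1 • u - x‖ ≤ 1 + μ1 := by
        calc ‖x' + μ1 • u - x‖ = ‖(x' - x) + μ1 • u‖ := by rw [add_sub_right_comm]
          _ ≤ ‖x' - x‖ + ‖μ1 • u‖ := norm_add_le _ _
          _ ≤ 1 + μ1 := by
              have hx'' : ‖x' - x‖ ≤ 1 := by
                have := mem_ball_iff_norm.mp hx'
                linarith
              have : ‖μ1 • u‖ = μ1 * ‖u‖ := by
                rw [norm_smul, Real.norm_eq_abs, abs_of_pos hμ1]
              nlinarith
      nlinarith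
    linarith
  -- identify the derivative with the integral of gradients
  have hintG : Integrable (fun u => gradx f (x + μ1 • u) y) ν := ub_integrable (hcontG x)
  have hF'int : Integrable (fun u => F' x u) ν :=
    ub_integrable (((InnerProductSpace.toDual ℝ (EuclideanSpace ℝ (Fin d1))).continuous).comp
      (hcontG x))
  have hid : ∫ u, F' x u ∂ν
      = (InnerProductSpace.toDual ℝ (EuclideanSpace ℝ (Fin d1))) (∫ u, gradx f (x + μ1 • u) y ∂ν) := by
    ext v
    rw [ContinuousLinearMap.integral_apply hF'int]
    simp only [hF', InnerProductSpace.toDual_apply_apply]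
    simp_rw [real_inner_comm]
    exact integral_inner hintG v
  rw [hid] at hmain
  have hgrad : gradient (fun x' => ∫ u, f (x' + μ1 • u) y ∂ν) x
      = ∫ u, gradx f (x + μ1 • u) y ∂ν := by
    have := hmain.hasGradientAt
    simpa using this.gradient
  rw [hgrad]
  -- final estimate
  have hconst : Integrable (fun _ : (EuclideanSpace ℝ (Fin d1)) => gradx f x y) ν := integrable_const _
  have hsub : (∫ u, gradx f (x + μ1 • u) y ∂ν) - gradx f x y
      = ∫ u, (gradx f (x + μ1 • u) y - gradx f x y) ∂ν := by
    rw [integral_sub hintG hconst, integral_const, probReal_univ, one_smul]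
  have hbd : ‖∫ u, (gradx f (x + μ1 • u) y - gradx f x y) ∂ν‖
      ≤ ∫ u, l * μ1 * ‖u‖ ∂ν := by
    refine norm_integral_le_of_norm_le (ub_integrable (continuous_const.mul continuous_norm)) ?_
    refine Filter.Eventually.of_forall fun u => ?_
    calc ‖gradx f (x + μ1 • u) y - gradx f x y‖ ≤ l * ‖(x + μ1 • u) - x‖ := hgl _ _
      _ = l * μ1 * ‖u‖ := by
          rw [add_sub_cancel_left, norm_smul, Real.norm_eq_abs, abs_of_pos hμ1, mul_assoc]
  have hint_norm : ∫ u, l * μ1 * ‖u‖ ∂ν = l * μ1 * ∫ u, ‖u‖ ∂ν := integral_const_mul _ _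
  have hM : ‖(∫ u, gradx f (x + μ1 • u) y ∂ν) - gradx f x y‖ ≤ l * μ1 * ((d1 : ℝ) / 2) := by
    rw [hsub]
    refine hbd.trans ?_
    rw [hint_norm]
    exact mul_le_mul_of_nonneg_left (ub_integral_norm_le d1) (mul_nonneg hl0 hμ1.le)
  have hsq := pow_le_pow_left₀ (norm_nonneg _) hM 2
  calc ‖(∫ u, gradx f (x + μ1 • u) y ∂ν) - gradx f x y‖ ^ 2
      ≤ (l * μ1 * ((d1 : ℝ) / 2)) ^ 2 := hsq
    _ = μ1 ^ 2 * (d1 : ℝ) ^ 2 * l ^ 2 / 4 := by ring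
end

section
/- Let f : ℝ^{d1} × ℝ^{d2} → ℝ be differentiable with l-Lipschitz gradients and let μ1 > 0. For u drawn uniformly from the unit sphere S^{d1−1} ⊂ ℝ^{d1}, the zeroth-order gradient estimator is ĝ(x,y;u) = (d1/μ1)(f(x + μ1 u, y) − f(x,y)) u. Then for all x, y: E_{u ~ U(S^{d1−1})} ‖ ĝ(x,y;u) ‖² ≤ 2 d1 ‖∇_x f(x,y)‖² + μ1² d1² l² / 2. -/
open MeasureTheory Metric

lemma taylor_quad {d : ℕ} (φ : EuclideanSpace ℝ (Fin d) → ℝ) (L : ℝ)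
    (hdiff : Differentiable ℝ φ)
    (hlip : ∀ a b, ‖gradient φ a - gradient φ b‖ ≤ L * ‖a - b‖)
    (x h : EuclideanSpace ℝ (Fin d)) :
    |φ (x + h) - φ x - (inner ℝ (gradient φ x) h : ℝ)| ≤ |L| * ‖h‖ ^ 2 / 2 := by
  have hlip' : ∀ a b, ‖gradient φ a - gradient φ b‖ ≤ |L| * ‖a - b‖ := fun a b =>
    (hlip a b).trans (mul_le_mul_of_nonneg_right (le_abs_self L) (norm_nonneg _))
  set ψ' : ℝ → ℝ := fun t => (inner ℝ (gradient φ (x + t • h)) h : ℝ) with hψ'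
  have hline : ∀ t : ℝ, HasDerivAt (fun s : ℝ => x + s • h) h t := by
    intro t
    simpa using ((hasDerivAt_id t).smul_const h).const_add x
  have hder : ∀ t : ℝ, HasDerivAt (fun s : ℝ => φ (x + s • h)) (ψ' t) t := by
    intro t
    have hg := (hdiff (x + t • h)).hasGradientAt
    have := hg.hasFDerivAt.comp_hasDerivAt t (hline t)
    exact this.congr_deriv (by rw [InnerProductSpace.toDual_apply_apply])
  have hgradcont : Continuous fun z : EuclideanSpace ℝ (Fin d) => gradient φ z := by
    refine (LipschitzWith.of_dist_le_mul (K := ⟨|L|, abs_nonneg L⟩) ?_).continuous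
    intro a b
    rw [dist_eq_norm, dist_eq_norm]; exact hlip' a b
  have hcontψ' : Continuous ψ' := by
    exact Continuous.inner (hgradcont.comp (continuous_const.add (continuous_id.smul continuous_const))) continuous_const
  have hftc : ∫ t in (0:ℝ)..1, ψ' t = φ (x + h) - φ x := by
    have := intervalIntegral.integral_eq_sub_of_hasDerivAt (a := (0:ℝ)) (b := 1)
      (fun t _ => hder t) (hcontψ'.intervalIntegrable 0 1)
    simpa using this
  have hconst : ∫ t in (0:ℝ)..1, (inner ℝ (gradient φ x) h : ℝ) = (inner ℝ (gradient φ x) h : ℝ) := by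
    simp
  have hsplit : φ (x + h) - φ x - (inner ℝ (gradient φ x) h : ℝ)
      = ∫ t in (0:ℝ)..1, (ψ' t - (inner ℝ (gradient φ x) h : ℝ)) := by
    rw [intervalIntegral.integral_sub (hcontψ'.intervalIntegrable 0 1)
      (intervalIntegrable_const), hftc, hconst]
  rw [hsplit]
  have hbound : ∀ t ∈ Set.uIoc (0:ℝ) 1,
      ‖ψ' t - (inner ℝ (gradient φ x) h : ℝ)‖ ≤ |L| * ‖h‖ ^ 2 * t := by
    intro t ht
    rw [Set.uIoc_of_le (by norm_num : (0:ℝ) ≤ 1)] at ht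
    have ht0 : 0 ≤ t := le_of_lt ht.1
    have : ψ' t - (inner ℝ (gradient φ x) h : ℝ)
        = (inner ℝ (gradient φ (x + t • h) - gradient φ x) h : ℝ) := by
      rw [inner_sub_left]
    rw [Real.norm_eq_abs, this]
    calc |(inner ℝ (gradient φ (x + t • h) - gradient φ x) h : ℝ)|
        ≤ ‖gradient φ (x + t • h) - gradient φ x‖ * ‖h‖ := abs_real_inner_le_norm _ _
      _ ≤ (|L| * ‖x + t • h - x‖) * ‖h‖ :=
          mul_le_mul_of_nonneg_right (hlip' _ _) (norm_nonneg _)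
      _ = |L| * ‖h‖ ^ 2 * t := by
          rw [add_sub_cancel_left, norm_smul, Real.norm_eq_abs, abs_of_nonneg ht0]
          ring
  have hint : IntervalIntegrable (fun t => |L| * ‖h‖ ^ 2 * t) volume 0 1 :=
    (continuous_const.mul continuous_id).intervalIntegrable 0 1
  have key := intervalIntegral.norm_integral_le_of_norm_le
    (g := fun t => |L| * ‖h‖ ^ 2 * t) (by norm_num : (0:ℝ) ≤ 1)
    (Filter.Eventually.of_forall fun t ht => hbound t (by rwa [Set.uIoc_of_le (by norm_num : (0:ℝ) ≤ 1)])) hint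
  rw [Real.norm_eq_abs] at key
  refine key.trans ?_
  rw [intervalIntegral.integral_const_mul, integral_id]
  apply le_of_eq
  ring

lemma inner_sq_moment {d : ℕ} (hd : 0 < d)
    (ν : Measure (EuclideanSpace ℝ (Fin d))) [IsProbabilityMeasure ν]
    (hsupp : ν (Metric.sphere (0 : EuclideanSpace ℝ (Fin d)) 1)ᶜ = 0)
    (hinv : ∀ T : EuclideanSpace ℝ (Fin d) ≃ₗᵢ[ℝ] EuclideanSpace ℝ (Fin d), ν.map T = ν)
    (g : EuclideanSpace ℝ (Fin d)) :
    ∫ u, (inner ℝ g u : ℝ) ^ 2 ∂ν = ‖g‖ ^ 2 / d := by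
  have hae : ∀ᵐ u ∂ν, ‖u‖ = 1 := by
    refine ae_iff.mpr ?_
    have : {u : EuclideanSpace ℝ (Fin d) | ¬ ‖u‖ = 1} = (sphere (0 : EuclideanSpace ℝ (Fin d)) 1)ᶜ := by
      ext u; simp [mem_sphere_zero_iff_norm]
    rw [this]; exact hsupp
  -- integrability of squared inner ℝ products
  have integ : ∀ g' : EuclideanSpace ℝ (Fin d), Integrable (fun u => (inner ℝ g' u : ℝ) ^ 2) ν := by
    intro g'
    refine (integrable_const (‖g'‖ ^ 2)).mono' ?_ ?_
    · exact ((Continuous.inner continuous_const continuous_id).pow 2).aestronglyMeasurable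
    · filter_upwards [hae] with u hu
      rw [Real.norm_eq_abs, abs_of_nonneg (sq_nonneg _), ← sq_abs]
      have := abs_real_inner_le_norm g' u
      rw [hu, mul_one] at this
      exact pow_le_pow_left₀ (abs_nonneg _) this 2
  -- invariance of integrals under linear isometries
  have key : ∀ (T : EuclideanSpace ℝ (Fin d) ≃ₗᵢ[ℝ] EuclideanSpace ℝ (Fin d))
      (φ : EuclideanSpace ℝ (Fin d) → ℝ), Continuous φ →
      ∫ u, φ (T u) ∂ν = ∫ u, φ u ∂ν := by
    intro T φ hφ
    have h1 : ∫ u, φ u ∂ν = ∫ u, φ u ∂(ν.map T) := by rw [hinv]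
    rw [h1, integral_map T.continuous.aemeasurable]
    exact hφ.aestronglyMeasurable
  set b0 := EuclideanSpace.basisFun (Fin d) ℝ with hb0
  have coord : ∀ (u : EuclideanSpace ℝ (Fin d)) (i : Fin d), (inner ℝ (b0 i) u : ℝ) = u i := by
    intro u i
    rw [← b0.repr_apply_apply u i]
    rfl
  set J : Fin d → ℝ := fun i => ∫ u, (u i) ^ 2 ∂ν with hJ
  have hJeq : ∀ i j, J i = J j := by
    intro i j
    have T := LinearIsometryEquiv.piLpCongrLeft 2 ℝ ℝ (Equiv.swap i j)
    have happ : ∀ u : EuclideanSpace ℝ (Fin d),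
        ((LinearIsometryEquiv.piLpCongrLeft 2 ℝ ℝ (Equiv.swap i j)) u) i = u j := by
      intro u
      rw [LinearIsometryEquiv.piLpCongrLeft_apply]
      simp only [Equiv.piCongrLeft', Equiv.coe_fn_mk, Equiv.symm_symm]
      rw [Equiv.symm_swap, Equiv.swap_apply_left]
    have hk := key (LinearIsometryEquiv.piLpCongrLeft 2 ℝ ℝ (Equiv.swap i j))
      (fun v => (v i) ^ 2)
      ((((Continuous.inner (continuous_const : Continuous fun _ : EuclideanSpace ℝ (Fin d) => b0 i)
          continuous_id).pow 2)).congr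
        (fun v => by show (inner ℝ (b0 i) (id v) : ℝ) ^ 2 = v i ^ 2; rw [id, coord v i]))
    calc J i = ∫ u, (u i) ^ 2 ∂ν := rfl
      _ = ∫ u, (((LinearIsometryEquiv.piLpCongrLeft 2 ℝ ℝ (Equiv.swap i j)) u) i) ^ 2 ∂ν := by
          rw [hk]
      _ = ∫ u, (u j) ^ 2 ∂ν := by
          refine integral_congr_ae (Filter.Eventually.of_forall fun u => ?_)
          show ((LinearIsometryEquiv.piLpCongrLeft 2 ℝ ℝ (Equiv.swap i j)) u) i ^ 2 = u j ^ 2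
          rw [happ u]
      _ = J j := rfl
  have hsum : ∑ i, J i = 1 := by
    have hintegr : ∀ i : Fin d, Integrable (fun u : EuclideanSpace ℝ (Fin d) => (u i) ^ 2) ν := by
      intro i
      exact (integ (b0 i)).congr (Filter.Eventually.of_forall fun u => by
        show (inner ℝ (b0 i) u : ℝ) ^ 2 = u i ^ 2
        rw [coord u i])
    rw [hJ]
    rw [← integral_finset_sum Finset.univ (fun i _ => hintegr i)]
    have : ∫ u, (∑ i, (u i) ^ 2) ∂ν = ∫ (_ : EuclideanSpace ℝ (Fin d)), (1:ℝ) ∂ν := by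
      refine integral_congr_ae ?_
      filter_upwards [hae] with u hu
      have h1 : (inner ℝ u u : ℝ) = ‖u‖ ^ 2 := real_inner_self_eq_norm_sq u
      have h2 : (inner ℝ u u : ℝ) = ∑ i, u i * u i := PiLp.inner_apply u u
      rw [hu] at h1
      calc ∑ i, (u i) ^ 2 = ∑ i, u i * u i := by simp [sq]
        _ = (1:ℝ) ^ 2 := by rw [← h2, h1]
        _ = 1 := one_pow 2
    rw [this]
    simp
  have hJval : ∀ i, J i = 1 / d := by
    intro i
    have : ∑ j, J j = ∑ _j : Fin d, J i := Finset.sum_congr rfl (fun j _ => hJeq j i)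
    rw [hsum, Finset.sum_const, Finset.card_univ, Fintype.card_fin] at this
    have hd' : (d:ℝ) ≠ 0 := Nat.cast_ne_zero.mpr hd.ne'
    field_simp
    rw [mul_comm]
    simpa [nsmul_eq_mul] using this.symm
  by_cases hg : g = 0
  · simp [hg]
  · have hgn : ‖g‖ ≠ 0 := norm_ne_zero_iff.mpr hg
    set w : EuclideanSpace ℝ (Fin d) := ‖g‖⁻¹ • g with hw
    have hwnorm : ‖w‖ = 1 := by
      rw [hw, norm_smul, norm_inv, norm_norm, inv_mul_cancel₀ hgn]
    have hgw : g = ‖g‖ • w := by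
      rw [hw, smul_smul, mul_inv_cancel₀ hgn, one_smul]
    -- orthonormal basis containing w
    set i0 : Fin d := ⟨0, hd⟩ with hi0
    have hortho : Orthonormal ℝ (Set.restrict ({i0} : Set (Fin d)) (fun _ : Fin d => w)) := by
      constructor
      · intro i; exact hwnorm
      · intro i j hij
        exact absurd (Subtype.ext (i.2.trans j.2.symm)) hij
    obtain ⟨b, hb⟩ := hortho.exists_orthonormalBasis_extension_of_card_eq
      (by simp [finrank_euclideanSpace])
    have hbw : b i0 = w := hb i0 rfl
    have hinner : ∀ u : EuclideanSpace ℝ (Fin d), (inner ℝ w (b.repr.symm u) : ℝ) = u i0 := by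
      intro u
      rw [← hbw, ← b.repr_apply_apply (b.repr.symm u) i0, b.repr.apply_symm_apply]
    have hk := key (b.repr.symm) (fun u => (inner ℝ w u : ℝ) ^ 2)
      ((Continuous.inner continuous_const continuous_id).pow 2)
    have hw2 : ∫ u, (inner ℝ w u : ℝ) ^ 2 ∂ν = 1 / d := by
      rw [← hk]
      rw [← hJval i0, hJ]
      refine integral_congr_ae (Filter.Eventually.of_forall fun u => ?_)
      show (inner ℝ w (b.repr.symm u) : ℝ) ^ 2 = u i0 ^ 2
      rw [hinner u]
    have hginner : ∀ u : EuclideanSpace ℝ (Fin d),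
        (inner ℝ g u : ℝ) = ‖g‖ * (inner ℝ w u : ℝ) := by
      intro u
      conv_lhs => rw [hgw]
      rw [real_inner_smul_left]
    calc ∫ u, (inner ℝ g u : ℝ) ^ 2 ∂ν
        = ∫ u, ‖g‖ ^ 2 * (inner ℝ w u : ℝ) ^ 2 ∂ν := by
          refine integral_congr_ae (Filter.Eventually.of_forall fun u => ?_)
          show (inner ℝ g u : ℝ) ^ 2 = ‖g‖ ^ 2 * (inner ℝ w u : ℝ) ^ 2
          rw [hginner u]
          ring
      _ = ‖g‖ ^ 2 * ∫ u, (inner ℝ w u : ℝ) ^ 2 ∂ν := integral_const_mul _ _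
      _ = ‖g‖ ^ 2 * (1 / d) := by rw [hw2]
      _ = ‖g‖ ^ 2 / d := by ring

lemma sphere_ae {d : ℕ} (ν : Measure (EuclideanSpace ℝ (Fin d)))
    (hsupp : ν (Metric.sphere (0 : EuclideanSpace ℝ (Fin d)) 1)ᶜ = 0) :
    ∀ᵐ u ∂ν, ‖u‖ = 1 := by
  refine ae_iff.mpr ?_
  have : {u : EuclideanSpace ℝ (Fin d) | ¬ ‖u‖ = 1}
      = (sphere (0 : EuclideanSpace ℝ (Fin d)) 1)ᶜ := by
    ext u; simp [mem_sphere_zero_iff_norm]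
  rw [this]; exact hsupp

lemma inner_sq_integrable {d : ℕ} (ν : Measure (EuclideanSpace ℝ (Fin d)))
    [IsProbabilityMeasure ν]
    (hsupp : ν (Metric.sphere (0 : EuclideanSpace ℝ (Fin d)) 1)ᶜ = 0)
    (g' : EuclideanSpace ℝ (Fin d)) :
    Integrable (fun u => (inner ℝ g' u : ℝ) ^ 2) ν := by
  refine (integrable_const (‖g'‖ ^ 2)).mono' ?_ ?_
  · exact ((Continuous.inner continuous_const continuous_id).pow 2).aestronglyMeasurable
  · filter_upwards [sphere_ae ν hsupp] with u hu
    rw [Real.norm_eq_abs, abs_of_nonneg (sq_nonneg _), ← sq_abs]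
    have := abs_real_inner_le_norm g' u
    rw [hu, mul_one] at this
    exact pow_le_pow_left₀ (abs_nonneg _) this 2


lemma add_sq_le_two (a b : ℝ) : (a + b) ^ 2 ≤ 2 * a ^ 2 + 2 * b ^ 2 := by
  nlinarith [sq_nonneg (a - b)]

lemma est_bound (D μ l t Δ r : ℝ) (hμ : 0 < μ)
    (he : Δ = μ * t + r) (hr : r ^ 2 ≤ l ^ 2 * μ ^ 4 / 4) :
    (D / μ * Δ) ^ 2 ≤ 2 * D ^ 2 * t ^ 2 + D ^ 2 * l ^ 2 * μ ^ 2 / 2 := by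
  have h1 : Δ ^ 2 ≤ 2 * (μ * t) ^ 2 + l ^ 2 * μ ^ 4 / 2 := by
    rw [he]
    have := add_sq_le_two (μ * t) r
    linarith
  have h2 : (D / μ * Δ) ^ 2 = D ^ 2 / μ ^ 2 * Δ ^ 2 := by ring
  rw [h2]
  have h3 : D ^ 2 / μ ^ 2 * Δ ^ 2 ≤ D ^ 2 / μ ^ 2 * (2 * (μ * t) ^ 2 + l ^ 2 * μ ^ 4 / 2) :=
    mul_le_mul_of_nonneg_left h1 (by positivity)
  refine h3.trans (le_of_eq ?_)
  field_simp

/-- Second-moment bound for the uniform-smoothing zeroth-order gradient estimator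
`ĝ(x,y;u) = (d1/μ1)(f(x + μ1 u, y) − f(x,y)) u`, where `u` is drawn from the uniform
(i.e. rotation-invariant) probability distribution `ν` on the unit sphere of `ℝ^{d1}`:
`E_u ‖ĝ(x,y;u)‖² ≤ 2 d1 ‖∇ₓ f(x,y)‖² + μ1² d1² l² / 2`. -/
theorem zeroth_order_estimator_second_moment {d1 d2 : ℕ}
    (f : EuclideanSpace ℝ (Fin d1) → EuclideanSpace ℝ (Fin d2) → ℝ)
    (l μ1 : ℝ) (hμ1 : 0 < μ1)
    (hdiff : Differentiable ℝ (fun p : EuclideanSpace ℝ (Fin d1) × EuclideanSpace ℝ (Fin d2) =>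
      f p.1 p.2))
    (hlipx : ∀ x1 y1 x2 y2, ‖gradx f x1 y1 - gradx f x2 y2‖ ≤ l * (‖x1 - x2‖ + ‖y1 - y2‖))
    (hlipy : ∀ x1 y1 x2 y2,
      ‖gradient (fun y' => f x1 y') y1 - gradient (fun y' => f x2 y') y2‖ ≤
        l * (‖x1 - x2‖ + ‖y1 - y2‖))
    (ν : Measure (EuclideanSpace ℝ (Fin d1))) [IsProbabilityMeasure ν]
    (hsupp : ν (Metric.sphere (0 : EuclideanSpace ℝ (Fin d1)) 1)ᶜ = 0)
    (hinv : ∀ T : EuclideanSpace ℝ (Fin d1) ≃ₗᵢ[ℝ] EuclideanSpace ℝ (Fin d1), ν.map T = ν) :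
    ∀ (x : EuclideanSpace ℝ (Fin d1)) (y : EuclideanSpace ℝ (Fin d2)),
      ∫ u, ‖(((d1 : ℝ) / μ1) * (f (x + μ1 • u) y - f x y)) • u‖ ^ 2 ∂ν ≤
        2 * (d1 : ℝ) * ‖gradx f x y‖ ^ 2 + μ1 ^ 2 * (d1 : ℝ) ^ 2 * l ^ 2 / 2 := by
  intro x y
  have hd1 : 0 < d1 := by
    rcases Nat.eq_zero_or_pos d1 with h0 | h
    · exfalso
      subst h0
      have hs : (sphere (0 : EuclideanSpace ℝ (Fin 0)) 1) = ∅ := by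
        ext u
        have hu : u = 0 := Subsingleton.elim u 0
        simp [mem_sphere_zero_iff_norm, hu]
      rw [hs, Set.compl_empty, measure_univ] at hsupp
      exact one_ne_zero hsupp
    · exact h
  set g := gradx f x y with hg
  set φ : EuclideanSpace ℝ (Fin d1) → ℝ := fun x' => f x' y with hφ
  have hφdiff : Differentiable ℝ φ := by
    intro z
    exact ((hdiff (z, y)).comp z (differentiableAt_id.prodMk (differentiableAt_const y) :
      DifferentiableAt ℝ (fun z' : EuclideanSpace ℝ (Fin d1) => (z', y)) z))
  have hlipφ : ∀ a b, ‖gradient φ a - gradient φ b‖ ≤ l * ‖a - b‖ := by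
    intro a b
    have h := hlipx a y b y
    rw [sub_self, norm_zero, add_zero] at h; exact h
  have hae : ∀ᵐ u ∂ν, ‖u‖ = 1 := sphere_ae ν hsupp
  set B : EuclideanSpace ℝ (Fin d1) → ℝ := fun u =>
    2 * (d1:ℝ)^2 * (inner ℝ g u : ℝ)^2 + (d1:ℝ)^2 * l^2 * μ1^2 / 2 with hB
  have hpt : ∀ u : EuclideanSpace ℝ (Fin d1), ‖u‖ = 1 →
      ‖(((d1 : ℝ) / μ1) * (f (x + μ1 • u) y - f x y)) • u‖ ^ 2 ≤ B u := by
    intro u hu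
    set Δ : ℝ := f (x + μ1 • u) y - f x y with hΔdef
    set t : ℝ := (inner ℝ g u : ℝ) with ht
    have hnormu : ‖μ1 • u‖ = μ1 := by
      rw [norm_smul, Real.norm_eq_abs, abs_of_pos hμ1, hu, mul_one]
    have htay := taylor_quad φ l hφdiff hlipφ x (μ1 • u)
    rw [hnormu] at htay
    have hip : (inner ℝ (gradient φ x) (μ1 • u) : ℝ) = μ1 * t := by
      have : gradient φ x = g := rfl
      rw [this, real_inner_smul_right]
    rw [hip] at htay
    have hΔφ : φ (x + μ1 • u) - φ x = Δ := rfl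
    rw [hΔφ] at htay
    set r : ℝ := Δ - μ1 * t with hr
    have hrabs : |r| ≤ |l| * μ1 ^ 2 / 2 := htay
    have hr2 : r ^ 2 ≤ l ^ 2 * μ1 ^ 4 / 4 := by
      have h1 : |r| ^ 2 ≤ (|l| * μ1 ^ 2 / 2) ^ 2 :=
        pow_le_pow_left₀ (abs_nonneg _) hrabs 2
      rw [sq_abs] at h1
      calc r ^ 2 ≤ (|l| * μ1 ^ 2 / 2) ^ 2 := h1
        _ = l ^ 2 * μ1 ^ 4 / 4 := by rw [div_pow, mul_pow, sq_abs]; ring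
    have hlhs : ‖(((d1 : ℝ) / μ1) * Δ) • u‖ ^ 2 = ((d1:ℝ)/μ1 * Δ) ^ 2 := by
      rw [norm_smul, Real.norm_eq_abs, hu, mul_one, sq_abs]
    rw [hlhs]
    exact est_bound (d1:ℝ) μ1 l t Δ r hμ1 (by rw [hr]; ring) hr2
  have hBint : Integrable B ν := by
    rw [hB]
    exact ((inner_sq_integrable ν hsupp g).const_mul _).add (integrable_const _)
  have hBval : ∫ u, B u ∂ν = 2 * (d1:ℝ)^2 * (‖g‖^2 / d1) + (d1:ℝ)^2 * l^2 * μ1^2 / 2 := by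
    rw [hB, integral_add ((inner_sq_integrable ν hsupp g).const_mul _) (integrable_const _),
      integral_const_mul, inner_sq_moment hd1 ν hsupp hinv g, integral_const]
    simp
  have hmono : ∫ u, ‖(((d1 : ℝ) / μ1) * (f (x + μ1 • u) y - f x y)) • u‖ ^ 2 ∂ν
      ≤ ∫ u, B u ∂ν := by
    refine integral_mono_of_nonneg (Filter.Eventually.of_forall fun u => by positivity) hBint ?_
    filter_upwards [hae] with u hu
    exact hpt u hu
  refine hmono.trans ?_
  rw [hBval]
  have hd1' : (d1:ℝ) ≠ 0 := Nat.cast_ne_zero.mpr hd1.ne'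
  have : 2 * (d1:ℝ)^2 * (‖g‖^2 / d1) = 2 * (d1:ℝ) * ‖g‖^2 := by
    field_simp
  rw [this]
  have : (d1:ℝ)^2 * l^2 * μ1^2 / 2 = μ1 ^ 2 * (d1 : ℝ) ^ 2 * l ^ 2 / 2 := by ring
  rw [this]
end

section
/- Let f : ℝ^{d1} × ℝ^{d2} → ℝ be differentiable with l-Lipschitz gradients and let μ1 > 0. For u on the unit sphere S^{d1−1} ⊂ ℝ^{d1} define ĝ(x,y;u) = (d1/μ1)(f(x + μ1 u, y) − f(x,y)) u. Then for all (x1,y1), (x2,y2): E_{u ~ U(S^{d1−1})} ‖ ĝ(x1,y1;u) − ĝ(x2,y2;u) ‖² ≤ 3 d1 l² (‖x1 − x2‖² + ‖y1 − y2‖²) + (3/2) l² μ1² d1². -/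
open MeasureTheory Metric
open scoped RealInnerProductSpace

section ZOHelpers

variable {d1 d2 : ℕ}

private lemma ZOftc (φ φd : ℝ → ℝ) (hφ : ∀ t, HasDerivAt φ (φd t) t)
    (hc : Continuous φd) (c c₀ : ℝ) (hb : ∀ t ∈ Set.Icc (0:ℝ) 1, |φd t| ≤ c * t + c₀) :
    |φ 1 - φ 0| ≤ c / 2 + c₀ := by
  have h1 : ∫ t in (0:ℝ)..1, φd t = φ 1 - φ 0 :=
    intervalIntegral.integral_eq_sub_of_hasDerivAt (fun t _ => hφ t) (hc.intervalIntegrable 0 1)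
  have hg : IntervalIntegrable (fun t => c * t + c₀) volume 0 1 := by
    apply Continuous.intervalIntegrable; continuity
  have hle : ∀ᵐ t ∂(volume.restrict (Set.uIoc (0:ℝ) 1)), ‖φd t‖ ≤ c * t + c₀ := by
    refine (ae_restrict_iff' measurableSet_uIoc).2 (Filter.Eventually.of_forall ?_)
    intro t ht
    rw [Set.uIoc_of_le zero_le_one] at ht
    simpa [Real.norm_eq_abs] using hb t ⟨ht.1.le, ht.2⟩
  have h2 : ‖∫ t in (0:ℝ)..1, φd t‖ ≤ |∫ t in (0:ℝ)..1, (c * t + c₀)| :=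
    intervalIntegral.norm_integral_le_abs_of_norm_le hle hg
  have h3 : ∫ t in (0:ℝ)..1, (c * t + c₀) = c / 2 + c₀ := by
    rw [intervalIntegral.integral_add (by apply Continuous.intervalIntegrable; continuity)
      intervalIntegrable_const, intervalIntegral.integral_const_mul, integral_id,
      intervalIntegral.integral_const]
    norm_num; ring
  have hnn : 0 ≤ c / 2 + c₀ := by
    have := hb (1/2) (by norm_num)
    have h0 : (0:ℝ) ≤ |φd (1/2)| := abs_nonneg _
    nlinarith
  rw [h1, h3, abs_of_nonneg hnn] at h2
  simpa [Real.norm_eq_abs] using h2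

private lemma ZOswap (e w : EuclideanSpace ℝ (Fin d1)) (he : ‖e‖ = 1) (hw : ‖w‖ = 1)
    (hne : e ≠ w) : Submodule.reflection ((ℝ ∙ (e - w))ᗮ) e = w := by
  have hsub : e - w ≠ 0 := sub_ne_zero.2 hne
  have hnpos : (0:ℝ) < ‖e - w‖ ^ 2 := pow_pos (norm_pos_iff.mpr hsub) 2
  have hnorm : ‖e - w‖ ^ 2 = 2 - 2 * ⟪e, w⟫ := by
    rw [← real_inner_self_eq_norm_sq]
    simp only [inner_sub_left, inner_sub_right]
    rw [real_inner_self_eq_norm_sq, real_inner_self_eq_norm_sq, real_inner_comm w e]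
    rw [he, hw]; ring
  have hip : ⟪e - w, e⟫ = 1 - ⟪e, w⟫ := by
    simp only [inner_sub_left]
    rw [real_inner_self_eq_norm_sq, he, real_inner_comm w e]; ring
  rw [Submodule.reflection_orthogonal_apply, Submodule.reflection_singleton_apply]
  have hs : (2:ℕ) • ((⟪e - w, e⟫ / ((‖e - w‖:ℝ) ^ 2)) • (e - w)) = e - w := by
    rw [two_smul, ← add_smul]
    have h5 : ⟪e - w, e⟫ / ((‖e - w‖:ℝ) ^ 2) + ⟪e - w, e⟫ / ((‖e - w‖:ℝ) ^ 2) = 1 := by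
      rw [hip, hnorm]
      rw [← add_div, div_eq_one_iff_eq (by rw [← hnorm]; exact hnpos.ne')]
      ring
    rw [h5, one_smul]
  simp only [RCLike.ofReal_real_eq_id, id_eq]
  rw [hs]
  abel

private lemma ZOreflg (g : EuclideanSpace ℝ (Fin d1)) (u : EuclideanSpace ℝ (Fin d1)) :
    Submodule.reflection ((ℝ ∙ g)ᗮ) u = u - (2 * ⟪g, u⟫ / ‖g‖ ^ 2) • g := by
  rw [Submodule.reflection_orthogonal_apply, Submodule.reflection_singleton_apply]
  simp only [RCLike.ofReal_real_eq_id, id_eq]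
  have hs : (2:ℕ) • ((⟪g, u⟫ / (‖g‖ ^ 2)) • g) = (2 * ⟪g, u⟫ / ‖g‖ ^ 2) • g := by
    rw [two_smul, ← add_smul]
    congr 1; ring
  rw [hs]; abel

private lemma ZOreflg_inner (g : EuclideanSpace ℝ (Fin d1)) (hg : g ≠ 0)
    (u : EuclideanSpace ℝ (Fin d1)) :
    ⟪g, Submodule.reflection ((ℝ ∙ g)ᗮ) u⟫ = -⟪g, u⟫ := by
  rw [ZOreflg g u]
  have h0 : ‖g‖ ^ 2 ≠ 0 := (pow_pos (norm_pos_iff.mpr hg) 2).ne'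
  rw [inner_sub_right, real_inner_smul_right, real_inner_self_eq_norm_sq]
  field_simp
  ring

private lemma ZOreflg_dist (g : EuclideanSpace ℝ (Fin d1)) (hg : g ≠ 0)
    (u : EuclideanSpace ℝ (Fin d1)) :
    ‖u - Submodule.reflection ((ℝ ∙ g)ᗮ) u‖ = 2 * |⟪g, u⟫| / ‖g‖ := by
  rw [ZOreflg g u]
  have h0 : (0:ℝ) < ‖g‖ := norm_pos_iff.mpr hg
  rw [sub_sub_cancel, norm_smul]
  rw [Real.norm_eq_abs, abs_div, abs_mul]
  rw [abs_of_nonneg (by positivity : (0:ℝ) ≤ (2:ℝ)), abs_of_nonneg (by positivity : (0:ℝ) ≤ ‖g‖^2)]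
  field_simp

private lemma ZOaenorm (ν : Measure (EuclideanSpace ℝ (Fin d1)))
    (hsupp : ν (Metric.sphere (0 : EuclideanSpace ℝ (Fin d1)) 1)ᶜ = 0) :
    ∀ᵐ u ∂ν, ‖u‖ = 1 := by
  rw [ae_iff]
  refine measure_mono_null ?_ hsupp
  intro u hu
  simp only [Set.mem_setOf_eq] at hu
  simp only [Set.mem_compl_iff, mem_sphere_iff_norm, sub_zero]
  exact hu

private lemma ZOint (ν : Measure (EuclideanSpace ℝ (Fin d1))) [IsProbabilityMeasure ν]
    (φ : EuclideanSpace ℝ (Fin d1) → ℝ) (hc : Continuous φ) (C : ℝ)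
    (h : ∀ᵐ u ∂ν, |φ u| ≤ C) : Integrable φ ν :=
  (integrable_const C).mono' hc.aestronglyMeasurable (by simpa [Real.norm_eq_abs] using h)

private lemma ZOinv (ν : Measure (EuclideanSpace ℝ (Fin d1))) [IsProbabilityMeasure ν]
    (hinv : ∀ T : EuclideanSpace ℝ (Fin d1) ≃ₗᵢ[ℝ] EuclideanSpace ℝ (Fin d1), ν.map T = ν)
    (T : EuclideanSpace ℝ (Fin d1) ≃ₗᵢ[ℝ] EuclideanSpace ℝ (Fin d1))
    (φ : EuclideanSpace ℝ (Fin d1) → ℝ) (hφ : AEStronglyMeasurable φ ν) :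
    ∫ u, φ (T u) ∂ν = ∫ u, φ u ∂ν := by
  conv_rhs => rw [← hinv T]
  rw [integral_map (T.continuous.aemeasurable) (by rw [hinv T]; exact hφ)]

private lemma ZOinner_sq_int (ν : Measure (EuclideanSpace ℝ (Fin d1))) [IsProbabilityMeasure ν]
    (hsupp : ν (Metric.sphere (0 : EuclideanSpace ℝ (Fin d1)) 1)ᶜ = 0)
    (w : EuclideanSpace ℝ (Fin d1)) :
    Integrable (fun u => ⟪w, u⟫ ^ 2) ν := by
  refine ZOint ν _ ((continuous_const.inner continuous_id).pow 2) (‖w‖ ^ 2) ?_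
  filter_upwards [ZOaenorm ν hsupp] with u hu
  have h1 : |⟪w, u⟫| ≤ ‖w‖ * ‖u‖ := abs_real_inner_le_norm w u
  rw [hu, mul_one] at h1
  rw [abs_pow]
  nlinarith [abs_nonneg ⟪w, u⟫]

private lemma ZOmoment (ν : Measure (EuclideanSpace ℝ (Fin d1))) [IsProbabilityMeasure ν]
    (hsupp : ν (Metric.sphere (0 : EuclideanSpace ℝ (Fin d1)) 1)ᶜ = 0)
    (hinv : ∀ T : EuclideanSpace ℝ (Fin d1) ≃ₗᵢ[ℝ] EuclideanSpace ℝ (Fin d1), ν.map T = ν)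
    (e : EuclideanSpace ℝ (Fin d1)) (he : ‖e‖ = 1) :
    ∫ u, ⟪e, u⟫ ^ 2 ∂ν = 1 / d1 := by
  have hint : ∀ w : EuclideanSpace ℝ (Fin d1), Integrable (fun u => ⟪w, u⟫ ^ 2) ν :=
    fun w => ZOinner_sq_int ν hsupp w
  have hsame : ∀ w : EuclideanSpace ℝ (Fin d1), ‖w‖ = 1 →
      ∫ u, ⟪w, u⟫ ^ 2 ∂ν = ∫ u, ⟪e, u⟫ ^ 2 ∂ν := by
    intro w hw
    by_cases hew : e = w
    · rw [hew]
    · set R := Submodule.reflection ((ℝ ∙ (e - w))ᗮ) with hRdef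
      have hRe : R e = w := ZOswap e w he hw hew
      have step : ∫ u, ⟪w, u⟫ ^ 2 ∂ν = ∫ u, ⟪w, R u⟫ ^ 2 ∂ν :=
        (ZOinv ν hinv R _ (((continuous_const.inner continuous_id).pow 2).aestronglyMeasurable)).symm
      rw [step]
      refine integral_congr_ae (Filter.Eventually.of_forall (fun u => ?_))
      show ⟪w, R u⟫ ^ 2 = ⟪e, u⟫ ^ 2
      rw [← hRe, LinearIsometryEquiv.inner_map_map]
  have hunit : ∀ i : Fin d1, ‖(EuclideanSpace.single i (1:ℝ))‖ = 1 := by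
    intro i; rw [EuclideanSpace.norm_single]; norm_num
  have hsum : ∑ i : Fin d1, ∫ u, ⟪EuclideanSpace.single i (1:ℝ), u⟫ ^ 2 ∂ν = 1 := by
    rw [← integral_finset_sum _ (fun i _ => hint _)]
    have hae : ∀ᵐ u ∂ν, (∑ i : Fin d1, ⟪EuclideanSpace.single i (1:ℝ), u⟫ ^ 2) = 1 := by
      filter_upwards [ZOaenorm ν hsupp] with u hu
      have hh : ∑ i : Fin d1, ⟪EuclideanSpace.single i (1:ℝ), u⟫ ^ 2 = ⟪u, u⟫ := by
        rw [PiLp.inner_apply]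
        refine Finset.sum_congr rfl (fun i _ => ?_)
        rw [EuclideanSpace.inner_single_left]
        simp [RCLike.inner_apply]
      rw [hh, real_inner_self_eq_norm_sq, hu]; norm_num
    rw [integral_congr_ae hae]
    simp
  have hfin : (d1 : ℝ) * ∫ u, ⟪e, u⟫ ^ 2 ∂ν = 1 := by
    rw [← hsum, Finset.sum_congr rfl (fun i _ => hsame _ (hunit i))]
    rw [Finset.sum_const, Finset.card_univ, Fintype.card_fin, nsmul_eq_mul]
  have hn0 : (d1:ℝ) ≠ 0 := by
    intro h
    rw [h, zero_mul] at hfin; norm_num at hfin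
  field_simp at hfin ⊢
  linarith

private lemma ZOdiffx (f : EuclideanSpace ℝ (Fin d1) → EuclideanSpace ℝ (Fin d2) → ℝ)
    (hdiff : Differentiable ℝ (fun p : EuclideanSpace ℝ (Fin d1) × EuclideanSpace ℝ (Fin d2) =>
      f p.1 p.2)) (y : EuclideanSpace ℝ (Fin d2)) :
    Differentiable ℝ (fun x => f x y) := by
  intro x
  exact (hdiff (x, y)).comp x ((differentiableAt_fun_id (𝕜 := ℝ) (x := x)).prodMk (differentiableAt_const y))

private lemma ZOgradx_cont (f : EuclideanSpace ℝ (Fin d1) → EuclideanSpace ℝ (Fin d2) → ℝ) (l : ℝ)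
    (hlipx : ∀ x1 y1 x2 y2, ‖gradx f x1 y1 - gradx f x2 y2‖ ≤ l * (‖x1 - x2‖ + ‖y1 - y2‖))
    (y : EuclideanSpace ℝ (Fin d2)) :
    Continuous (fun x => gradx f x y) := by
  apply (LipschitzWith.of_dist_le_mul (K := Real.toNNReal l) ?_).continuous
  intro x x'
  rw [dist_eq_norm, dist_eq_norm]
  calc ‖gradx f x y - gradx f x' y‖ ≤ l * (‖x - x'‖ + ‖y - y‖) := hlipx x y x' y
    _ = l * ‖x - x'‖ := by rw [sub_self, norm_zero, add_zero]
    _ ≤ Real.toNNReal l * ‖x - x'‖ :=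
        mul_le_mul_of_nonneg_right (Real.le_coe_toNNReal l) (norm_nonneg _)

private lemma ZOline (f : EuclideanSpace ℝ (Fin d1) → EuclideanSpace ℝ (Fin d2) → ℝ)
    (hdiff : Differentiable ℝ (fun p : EuclideanSpace ℝ (Fin d1) × EuclideanSpace ℝ (Fin d2) =>
      f p.1 p.2)) (y : EuclideanSpace ℝ (Fin d2)) (x v : EuclideanSpace ℝ (Fin d1)) (t : ℝ) :
    HasDerivAt (fun τ : ℝ => f (x + τ • v) y) ⟪gradx f (x + t • v) y, v⟫ t := by
  have hline : HasDerivAt (fun τ : ℝ => x + τ • v) v t := by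
    simpa using ((hasDerivAt_id t).smul_const v).const_add x
  have hg : HasGradientAt (fun x' => f x' y) (gradx f (x + t • v) y) (x + t • v) :=
    ((ZOdiffx f hdiff y) (x + t • v)).hasGradientAt
  have hf := hg.hasFDerivAt.comp_hasDerivAt t hline
  simpa [InnerProductSpace.toDual_apply_apply, Function.comp_def] using hf

private lemma ZOtaylor (f : EuclideanSpace ℝ (Fin d1) → EuclideanSpace ℝ (Fin d2) → ℝ) (l : ℝ)
    (hdiff : Differentiable ℝ (fun p : EuclideanSpace ℝ (Fin d1) × EuclideanSpace ℝ (Fin d2) =>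
      f p.1 p.2))
    (hlipx : ∀ x1 y1 x2 y2, ‖gradx f x1 y1 - gradx f x2 y2‖ ≤ l * (‖x1 - x2‖ + ‖y1 - y2‖))
    (y : EuclideanSpace ℝ (Fin d2)) (x v : EuclideanSpace ℝ (Fin d1)) :
    |f (x + v) y - f x y - ⟪gradx f x y, v⟫| ≤ l / 2 * ‖v‖ ^ 2 := by
  have key := ZOftc (fun t => f (x + t • v) y - t * ⟪gradx f x y, v⟫)
      (fun t => ⟪gradx f (x + t • v) y, v⟫ - ⟪gradx f x y, v⟫)
      (fun t => ((ZOline f hdiff y x v t).sub (hasDerivAt_mul_const _)))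
      ?_ (l * ‖v‖ ^ 2) 0 ?_
  · have h1 : x + (1:ℝ) • v = x + v := by rw [one_smul]
    have h0 : x + (0:ℝ) • v = x := by rw [zero_smul, add_zero]
    rw [h1, h0] at key
    calc |f (x + v) y - f x y - ⟪gradx f x y, v⟫|
        = |f (x + v) y - 1 * ⟪gradx f x y, v⟫ - (f x y - 0 * ⟪gradx f x y, v⟫)| := by ring_nf
      _ ≤ l * ‖v‖ ^ 2 / 2 + 0 := key
      _ = l / 2 * ‖v‖ ^ 2 := by ring
  · exact ((((ZOgradx_cont f l hlipx y).comp
      (continuous_const.add (continuous_id.smul continuous_const))).inner continuous_const).sub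
      continuous_const)
  · intro t ht
    have hl := hlipx (x + t • v) y x y
    have h2 : ‖x + t • v - x‖ = t * ‖v‖ := by
      rw [add_sub_cancel_left, norm_smul, Real.norm_eq_abs, abs_of_nonneg ht.1]
    rw [h2, sub_self, norm_zero, add_zero] at hl
    have h3 : ⟪gradx f (x + t • v) y, v⟫ - ⟪gradx f x y, v⟫
        = ⟪gradx f (x + t • v) y - gradx f x y, v⟫ := by rw [inner_sub_left]
    show |⟪gradx f (x + t • v) y, v⟫ - ⟪gradx f x y, v⟫| ≤ l * ‖v‖ ^ 2 * t + 0
    rw [h3, add_zero]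
    calc |⟪gradx f (x + t • v) y - gradx f x y, v⟫|
        ≤ ‖gradx f (x + t • v) y - gradx f x y‖ * ‖v‖ := abs_real_inner_le_norm _ _
      _ ≤ (l * (t * ‖v‖)) * ‖v‖ := mul_le_mul_of_nonneg_right hl (norm_nonneg _)
      _ = l * ‖v‖ ^ 2 * t := by ring

private lemma ZOglip (f : EuclideanSpace ℝ (Fin d1) → EuclideanSpace ℝ (Fin d2) → ℝ) (l : ℝ)
    (hdiff : Differentiable ℝ (fun p : EuclideanSpace ℝ (Fin d1) × EuclideanSpace ℝ (Fin d2) =>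
      f p.1 p.2))
    (hlipx : ∀ x1 y1 x2 y2, ‖gradx f x1 y1 - gradx f x2 y2‖ ≤ l * (‖x1 - x2‖ + ‖y1 - y2‖))
    (x1 x2 : EuclideanSpace ℝ (Fin d1)) (y1 y2 : EuclideanSpace ℝ (Fin d2))
    (v v' : EuclideanSpace ℝ (Fin d1)) :
    |(f (x1 + v) y1 - f (x2 + v) y2) - (f (x1 + v') y1 - f (x2 + v') y2)|
      ≤ l * (‖x1 - x2‖ + ‖y1 - y2‖) * ‖v - v'‖ := by
  set w := v - v' with hw
  have key := ZOftc
      (fun t => f ((x1 + v') + t • w) y1 - f ((x2 + v') + t • w) y2)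
      (fun t => ⟪gradx f ((x1 + v') + t • w) y1, w⟫ - ⟪gradx f ((x2 + v') + t • w) y2, w⟫)
      (fun t => (ZOline f hdiff y1 (x1 + v') w t).sub (ZOline f hdiff y2 (x2 + v') w t))
      ?_ 0 (l * (‖x1 - x2‖ + ‖y1 - y2‖) * ‖w‖) ?_
  · have h1 : (x1 + v') + (1:ℝ) • w = x1 + v := by rw [one_smul, hw]; abel
    have h2 : (x2 + v') + (1:ℝ) • w = x2 + v := by rw [one_smul, hw]; abel
    have h3 : (x1 + v') + (0:ℝ) • w = x1 + v' := by rw [zero_smul, add_zero]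
    have h4 : (x2 + v') + (0:ℝ) • w = x2 + v' := by rw [zero_smul, add_zero]
    rw [h1, h2, h3, h4] at key
    calc |(f (x1 + v) y1 - f (x2 + v) y2) - (f (x1 + v') y1 - f (x2 + v') y2)|
        ≤ 0 / 2 + l * (‖x1 - x2‖ + ‖y1 - y2‖) * ‖w‖ := key
      _ = l * (‖x1 - x2‖ + ‖y1 - y2‖) * ‖w‖ := by ring
  · apply Continuous.sub
    · exact ((ZOgradx_cont f l hlipx y1).comp
        (continuous_const.add (continuous_id.smul continuous_const))).inner continuous_const
    · exact ((ZOgradx_cont f l hlipx y2).comp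
        (continuous_const.add (continuous_id.smul continuous_const))).inner continuous_const
  · intro t ht
    show |⟪gradx f ((x1 + v') + t • w) y1, w⟫ - ⟪gradx f ((x2 + v') + t • w) y2, w⟫|
        ≤ 0 * t + l * (‖x1 - x2‖ + ‖y1 - y2‖) * ‖w‖
    have hl := hlipx ((x1 + v') + t • w) y1 ((x2 + v') + t • w) y2
    have hx : ((x1 + v') + t • w) - ((x2 + v') + t • w) = x1 - x2 := by abel
    rw [hx] at hl
    have h3 : ⟪gradx f ((x1 + v') + t • w) y1, w⟫ - ⟪gradx f ((x2 + v') + t • w) y2, w⟫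
        = ⟪gradx f ((x1 + v') + t • w) y1 - gradx f ((x2 + v') + t • w) y2, w⟫ := by
      rw [inner_sub_left]
    rw [h3, zero_mul, zero_add]
    calc |⟪gradx f ((x1 + v') + t • w) y1 - gradx f ((x2 + v') + t • w) y2, w⟫|
        ≤ ‖gradx f ((x1 + v') + t • w) y1 - gradx f ((x2 + v') + t • w) y2‖ * ‖w‖ :=
          abs_real_inner_le_norm _ _
      _ ≤ (l * (‖x1 - x2‖ + ‖y1 - y2‖)) * ‖w‖ := mul_le_mul_of_nonneg_right hl (norm_nonneg _)
      _ = l * (‖x1 - x2‖ + ‖y1 - y2‖) * ‖w‖ := by ring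

end ZOHelpers

set_option maxHeartbeats 2000000 in
/-- Mean-squared-difference bound for the uniform-smoothing zeroth-order gradient estimator
`ĝ(x,y;u) = (d1/μ1)(f(x + μ1 u, y) − f(x,y)) u` evaluated at two points, where `u` is drawn from
the uniform (rotation-invariant) probability distribution `ν` on the unit sphere of `ℝ^{d1}`:
`E_u ‖ĝ(x1,y1;u) − ĝ(x2,y2;u)‖² ≤ 3 d1 l² (‖x1−x2‖² + ‖y1−y2‖²) + (3/2) l² μ1² d1²`. -/
theorem zeroth_order_estimator_difference_bound {d1 d2 : ℕ}
    (f : EuclideanSpace ℝ (Fin d1) → EuclideanSpace ℝ (Fin d2) → ℝ)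
    (l μ1 : ℝ) (hμ1 : 0 < μ1)
    (hdiff : Differentiable ℝ (fun p : EuclideanSpace ℝ (Fin d1) × EuclideanSpace ℝ (Fin d2) =>
      f p.1 p.2))
    (hlipx : ∀ x1 y1 x2 y2, ‖gradx f x1 y1 - gradx f x2 y2‖ ≤ l * (‖x1 - x2‖ + ‖y1 - y2‖))
    (hlipy : ∀ x1 y1 x2 y2,
      ‖gradient (fun y' => f x1 y') y1 - gradient (fun y' => f x2 y') y2‖ ≤
        l * (‖x1 - x2‖ + ‖y1 - y2‖))
    (ν : Measure (EuclideanSpace ℝ (Fin d1))) [IsProbabilityMeasure ν]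
    (hsupp : ν (Metric.sphere (0 : EuclideanSpace ℝ (Fin d1)) 1)ᶜ = 0)
    (hinv : ∀ T : EuclideanSpace ℝ (Fin d1) ≃ₗᵢ[ℝ] EuclideanSpace ℝ (Fin d1), ν.map T = ν) :
    ∀ (x1 x2 : EuclideanSpace ℝ (Fin d1)) (y1 y2 : EuclideanSpace ℝ (Fin d2)),
      ∫ u, ‖(((d1 : ℝ) / μ1) * (f (x1 + μ1 • u) y1 - f x1 y1)) • u -
            (((d1 : ℝ) / μ1) * (f (x2 + μ1 • u) y2 - f x2 y2)) • u‖ ^ 2 ∂ν ≤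
        3 * (d1 : ℝ) * l ^ 2 * (‖x1 - x2‖ ^ 2 + ‖y1 - y2‖ ^ 2) +
          3 / 2 * l ^ 2 * μ1 ^ 2 * (d1 : ℝ) ^ 2 := by
  intro x1 x2 y1 y2
  rcases Nat.eq_zero_or_pos d1 with hd0 | hdpos
  · exfalso
    subst hd0
    have hemp : (Metric.sphere (0 : EuclideanSpace ℝ (Fin 0)) 1) = ∅ := by
      ext u
      have hu : u = 0 := Subsingleton.elim u 0
      simp [hu]
    rw [hemp, Set.compl_empty] at hsupp
    have h1 := measure_univ (μ := ν)
    rw [hsupp] at h1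
    exact zero_ne_one h1
  -- main case
  have hμne : μ1 ≠ 0 := hμ1.ne'
  have hd1R : (1:ℝ) ≤ (d1:ℝ) := by exact_mod_cast hdpos
  have hdne : (d1:ℝ) ≠ 0 := by linarith
  set a := ‖x1 - x2‖ with ha
  set b := ‖y1 - y2‖ with hb
  set s := l * (a + b) with hs
  set g := gradx f x1 y1 - gradx f x2 y2 with hgdef
  set gn := ‖g‖ with hgn
  set G : EuclideanSpace ℝ (Fin d1) → ℝ :=
    fun v => (f (x1 + v) y1 - f x1 y1) - (f (x2 + v) y2 - f x2 y2) with hGdef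
  have hae := ZOaenorm ν hsupp
  -- Lipschitz property of G
  have hGlip : ∀ v v', |G v - G v'| ≤ s * ‖v - v'‖ := by
    intro v v'
    have h := ZOglip f l hdiff hlipx x1 x2 y1 y2 v v'
    have he : G v - G v' = (f (x1 + v) y1 - f (x2 + v) y2) - (f (x1 + v') y1 - f (x2 + v') y2) := by
      simp only [hGdef]; ring
    rw [he]
    exact h
  have hG0 : G 0 = 0 := by simp [hGdef]
  have hGbound : ∀ u : EuclideanSpace ℝ (Fin d1), |G (μ1 • u)| ≤ s * (μ1 * ‖u‖) := by
    intro u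
    have h := hGlip (μ1 • u) 0
    rw [hG0, sub_zero, sub_zero] at h
    rw [norm_smul, Real.norm_eq_abs, abs_of_pos hμ1] at h
    exact h
  -- quadratic remainder bound
  have hD : ∀ u : EuclideanSpace ℝ (Fin d1),
      |G (μ1 • u) - μ1 * ⟪g, u⟫| ≤ l * μ1 ^ 2 * ‖u‖ ^ 2 := by
    intro u
    have t1 := ZOtaylor f l hdiff hlipx y1 x1 (μ1 • u)
    have t2 := ZOtaylor f l hdiff hlipx y2 x2 (μ1 • u)
    have hsplit : G (μ1 • u) - μ1 * ⟪g, u⟫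
        = (f (x1 + μ1 • u) y1 - f x1 y1 - ⟪gradx f x1 y1, μ1 • u⟫)
          - (f (x2 + μ1 • u) y2 - f x2 y2 - ⟪gradx f x2 y2, μ1 • u⟫) := by
      simp only [hGdef, hgdef]
      rw [inner_sub_left, real_inner_smul_right, real_inner_smul_right]
      ring
    have hnv : ‖μ1 • u‖ ^ 2 = μ1 ^ 2 * ‖u‖ ^ 2 := by
      rw [norm_smul, Real.norm_eq_abs, mul_pow, sq_abs]
    rw [hsplit]
    calc |(f (x1 + μ1 • u) y1 - f x1 y1 - ⟪gradx f x1 y1, μ1 • u⟫)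
          - (f (x2 + μ1 • u) y2 - f x2 y2 - ⟪gradx f x2 y2, μ1 • u⟫)|
        ≤ |f (x1 + μ1 • u) y1 - f x1 y1 - ⟪gradx f x1 y1, μ1 • u⟫|
          + |f (x2 + μ1 • u) y2 - f x2 y2 - ⟪gradx f x2 y2, μ1 • u⟫| := abs_sub _ _
      _ ≤ l / 2 * ‖μ1 • u‖ ^ 2 + l / 2 * ‖μ1 • u‖ ^ 2 := add_le_add t1 t2
      _ = l * μ1 ^ 2 * ‖u‖ ^ 2 := by rw [hnv]; ring
  -- continuity facts
  have hfc1 : Continuous (fun x => f x y1) := (ZOdiffx f hdiff y1).continuous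
  have hfc2 : Continuous (fun x => f x y2) := (ZOdiffx f hdiff y2).continuous
  have hsmulc : Continuous (fun u : EuclideanSpace ℝ (Fin d1) => μ1 • u) :=
    continuous_id.const_smul μ1
  have hGcont : Continuous (fun u : EuclideanSpace ℝ (Fin d1) => G (μ1 • u)) := by
    have h1 : Continuous (fun u : EuclideanSpace ℝ (Fin d1) => f (x1 + μ1 • u) y1) :=
      hfc1.comp (continuous_const.add hsmulc)
    have h2 : Continuous (fun u : EuclideanSpace ℝ (Fin d1) => f (x2 + μ1 • u) y2) :=
      hfc2.comp (continuous_const.add hsmulc)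
    exact (h1.sub continuous_const).sub (h2.sub continuous_const)
  have hicont : Continuous (fun u : EuclideanSpace ℝ (Fin d1) => ⟪g, u⟫) :=
    continuous_const.inner continuous_id
  -- integrability facts
  have iGg : Integrable (fun u => ⟪g, u⟫ * G (μ1 • u)) ν := by
    refine ZOint ν _ (hicont.mul hGcont) (gn * (s * μ1)) ?_
    filter_upwards [hae] with u hu
    rw [abs_mul]
    have h1 : |⟪g, u⟫| ≤ gn := by
      have h := abs_real_inner_le_norm g u; rw [hu, mul_one] at h; exact h
    have h2 : |G (μ1 • u)| ≤ s * μ1 := by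
      have h := hGbound u; rw [hu, mul_one] at h; exact h
    exact mul_le_mul h1 h2 (abs_nonneg _) (norm_nonneg g)
  have i2 : Integrable (fun u => ⟪g, u⟫ ^ 2) ν := ZOinner_sq_int ν hsupp g
  have i3 : Integrable (fun u => (G (μ1 • u) - μ1 * ⟪g, u⟫) ^ 2) ν := by
    refine ZOint ν _ ((hGcont.sub (continuous_const.mul hicont)).pow 2) ((l * μ1 ^ 2) ^ 2) ?_
    filter_upwards [hae] with u hu
    have h1 := hD u
    rw [hu, one_pow, mul_one] at h1
    rw [abs_pow]
    nlinarith [abs_nonneg (G (μ1 • u) - μ1 * ⟪g, u⟫)]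
  -- exact second moment
  have hQ : ∫ u, ⟪g, u⟫ ^ 2 ∂ν = gn ^ 2 * (1 / d1) := by
    by_cases hg0 : g = 0
    · have hz : (fun u : EuclideanSpace ℝ (Fin d1) => ⟪g, u⟫ ^ 2) = fun _ => (0:ℝ) := by
        funext u; rw [hg0]; simp
      have hgz : gn = 0 := by rw [hgn, hg0, norm_zero]
      rw [hz, integral_zero, hgz]; ring
    · have hgne : gn ≠ 0 := by rw [hgn, ne_eq, norm_eq_zero]; exact hg0
      have he1 : ‖(gn⁻¹ • g : EuclideanSpace ℝ (Fin d1))‖ = 1 := by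
        rw [norm_smul, Real.norm_eq_abs, abs_inv, abs_of_nonneg (norm_nonneg g)]
        rw [← hgn]; field_simp
      have hrw : ∀ u : EuclideanSpace ℝ (Fin d1), ⟪g, u⟫ ^ 2 = gn ^ 2 * ⟪gn⁻¹ • g, u⟫ ^ 2 := by
        intro u
        rw [real_inner_smul_left]
        field_simp
      calc ∫ u, ⟪g, u⟫ ^ 2 ∂ν = ∫ u, gn ^ 2 * ⟪gn⁻¹ • g, u⟫ ^ 2 ∂ν :=
            integral_congr_ae (Filter.Eventually.of_forall (fun u => hrw u))
        _ = gn ^ 2 * ∫ u, ⟪gn⁻¹ • g, u⟫ ^ 2 ∂ν := integral_const_mul _ _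
        _ = gn ^ 2 * (1 / d1) := by rw [ZOmoment ν hsupp hinv _ he1]
  -- key cross-term bound via reflection symmetrization
  have hP : ∫ u, ⟪g, u⟫ * G (μ1 • u) ∂ν ≤ s * μ1 * gn * (1 / d1) := by
    by_cases hg0 : g = 0
    · have hz : (fun u : EuclideanSpace ℝ (Fin d1) => ⟪g, u⟫ * G (μ1 • u)) = fun _ => (0:ℝ) := by
        funext u; rw [hg0]; simp
      have hgz : gn = 0 := by rw [hgn, hg0, norm_zero]
      rw [hz, integral_zero, hgz]
      nlinarith []
    · have hgne : gn ≠ 0 := by rw [hgn, ne_eq, norm_eq_zero]; exact hg0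
      have hgpos : 0 < gn := by
        rw [hgn]; exact norm_pos_iff.mpr hg0
      set R := Submodule.reflection ((ℝ ∙ g)ᗮ) with hRdef
      have hRnorm : ∀ u : EuclideanSpace ℝ (Fin d1), ‖R u‖ = ‖u‖ := fun u => R.norm_map u
      have iGgR : Integrable (fun u => ⟪g, u⟫ * G (μ1 • R u)) ν := by
        refine ZOint ν _ (hicont.mul (hGcont.comp R.continuous)) (gn * (s * μ1)) ?_
        filter_upwards [hae] with u hu
        rw [abs_mul]
        have h1 : |⟪g, u⟫| ≤ gn := by
          have h := abs_real_inner_le_norm g u; rw [hu, mul_one] at h; exact h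
        have h2 : |G (μ1 • R u)| ≤ s * μ1 := by
          have h := hGbound (R u); rw [hRnorm u, hu, mul_one] at h; exact h
        exact mul_le_mul h1 h2 (abs_nonneg _) (norm_nonneg g)
      have hflip : ∫ u, ⟪g, u⟫ * G (μ1 • u) ∂ν = ∫ u, -(⟪g, u⟫ * G (μ1 • R u)) ∂ν := by
        have h1 : ∫ u, ⟪g, R u⟫ * G (μ1 • R u) ∂ν = ∫ u, ⟪g, u⟫ * G (μ1 • u) ∂ν :=
          ZOinv ν hinv R (fun u => ⟪g, u⟫ * G (μ1 • u))
            ((hicont.mul hGcont).aestronglyMeasurable)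
        rw [← h1]
        refine integral_congr_ae (Filter.Eventually.of_forall (fun u => ?_))
        show ⟪g, R u⟫ * G (μ1 • R u) = -(⟪g, u⟫ * G (μ1 • R u))
        rw [hRdef, ZOreflg_inner g hg0 u]
        ring
      have hP' : ∫ u, ⟪g, u⟫ * G (μ1 • R u) ∂ν = - ∫ u, ⟪g, u⟫ * G (μ1 • u) ∂ν := by
        rw [hflip, integral_neg, neg_neg]
      have hpt : ∀ u, ⟪g, u⟫ * G (μ1 • u) - ⟪g, u⟫ * G (μ1 • R u)
          ≤ 2 * s * μ1 / gn * ⟪g, u⟫ ^ 2 := by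
        intro u
        have hlip := hGlip (μ1 • u) (μ1 • R u)
        have hdist : ‖μ1 • u - μ1 • R u‖ = μ1 * (2 * |⟪g, u⟫| / gn) := by
          rw [← smul_sub, norm_smul, Real.norm_eq_abs, abs_of_pos hμ1, hRdef,
            ZOreflg_dist g hg0 u, hgn]
        have habs : |⟪g, u⟫| * |⟪g, u⟫| = ⟪g, u⟫ ^ 2 := by
          rw [← abs_mul, ← pow_two, abs_pow, sq_abs]
        calc ⟪g, u⟫ * G (μ1 • u) - ⟪g, u⟫ * G (μ1 • R u)
            = ⟪g, u⟫ * (G (μ1 • u) - G (μ1 • R u)) := by ring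
          _ ≤ |⟪g, u⟫ * (G (μ1 • u) - G (μ1 • R u))| := le_abs_self _
          _ = |⟪g, u⟫| * |G (μ1 • u) - G (μ1 • R u)| := abs_mul _ _
          _ ≤ |⟪g, u⟫| * (s * ‖μ1 • u - μ1 • R u‖) :=
              mul_le_mul_of_nonneg_left hlip (abs_nonneg _)
          _ = 2 * s * μ1 / gn * (|⟪g, u⟫| * |⟪g, u⟫|) := by rw [hdist]; ring
          _ = 2 * s * μ1 / gn * ⟪g, u⟫ ^ 2 := by rw [habs]
      have hmono : ∫ u, (⟪g, u⟫ * G (μ1 • u) - ⟪g, u⟫ * G (μ1 • R u)) ∂ν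
          ≤ ∫ u, 2 * s * μ1 / gn * ⟪g, u⟫ ^ 2 ∂ν :=
        integral_mono (iGg.sub iGgR) (i2.const_mul _) hpt
      rw [integral_sub iGg iGgR, integral_const_mul, hQ, hP'] at hmono
      have hfin : 2 * s * μ1 / gn * (gn ^ 2 * (1 / ↑d1)) = 2 * (s * μ1 * gn * (1 / ↑d1)) := by
        field_simp
      rw [hfin] at hmono
      linarith
  -- bound on the square of the remainder
  have hDint : ∫ u, (G (μ1 • u) - μ1 * ⟪g, u⟫) ^ 2 ∂ν ≤ (l * μ1 ^ 2) ^ 2 := by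
    have hb2 : ∀ᵐ u ∂ν, (G (μ1 • u) - μ1 * ⟪g, u⟫) ^ 2 ≤ (l * μ1 ^ 2) ^ 2 := by
      filter_upwards [hae] with u hu
      have h1 := hD u
      rw [hu, one_pow, mul_one] at h1
      nlinarith [abs_nonneg (G (μ1 • u) - μ1 * ⟪g, u⟫),
        le_abs_self (G (μ1 • u) - μ1 * ⟪g, u⟫), neg_abs_le (G (μ1 • u) - μ1 * ⟪g, u⟫)]
    calc ∫ u, (G (μ1 • u) - μ1 * ⟪g, u⟫) ^ 2 ∂ν ≤ ∫ _u, (l * μ1 ^ 2) ^ 2 ∂ν :=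
        integral_mono_ae i3 (integrable_const _) hb2
      _ = (l * μ1 ^ 2) ^ 2 := by simp [measure_univ]
  -- decomposition of the integral
  have hdecomp : ∫ u, G (μ1 • u) ^ 2 ∂ν
      = 2 * μ1 * (∫ u, ⟪g, u⟫ * G (μ1 • u) ∂ν) - μ1 ^ 2 * (∫ u, ⟪g, u⟫ ^ 2 ∂ν)
        + ∫ u, (G (μ1 • u) - μ1 * ⟪g, u⟫) ^ 2 ∂ν := by
    have hint1 : Integrable
        (fun u => 2 * μ1 * (⟪g, u⟫ * G (μ1 • u)) - μ1 ^ 2 * ⟪g, u⟫ ^ 2) ν := by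
      have h1 := iGg.const_mul (2 * μ1)
      have h2 := i2.const_mul (μ1 ^ 2)
      exact h1.sub h2
    calc ∫ u, G (μ1 • u) ^ 2 ∂ν
        = ∫ u, ((2 * μ1 * (⟪g, u⟫ * G (μ1 • u)) - μ1 ^ 2 * ⟪g, u⟫ ^ 2)
            + (G (μ1 • u) - μ1 * ⟪g, u⟫) ^ 2) ∂ν :=
          integral_congr_ae (Filter.Eventually.of_forall (fun u => by ring))
      _ = (∫ u, (2 * μ1 * (⟪g, u⟫ * G (μ1 • u)) - μ1 ^ 2 * ⟪g, u⟫ ^ 2) ∂ν)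
            + ∫ u, (G (μ1 • u) - μ1 * ⟪g, u⟫) ^ 2 ∂ν := integral_add hint1 i3
      _ = ((∫ u, 2 * μ1 * (⟪g, u⟫ * G (μ1 • u)) ∂ν) - ∫ u, μ1 ^ 2 * ⟪g, u⟫ ^ 2 ∂ν)
            + ∫ u, (G (μ1 • u) - μ1 * ⟪g, u⟫) ^ 2 ∂ν := by
          rw [integral_sub (iGg.const_mul (2 * μ1)) (i2.const_mul (μ1 ^ 2))]
      _ = 2 * μ1 * (∫ u, ⟪g, u⟫ * G (μ1 • u) ∂ν) - μ1 ^ 2 * (∫ u, ⟪g, u⟫ ^ 2 ∂ν)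
            + ∫ u, (G (μ1 • u) - μ1 * ⟪g, u⟫) ^ 2 ∂ν := by
          rw [integral_const_mul, integral_const_mul]
  -- rewrite the left-hand side
  have hLHS : ∫ u, ‖(((d1 : ℝ) / μ1) * (f (x1 + μ1 • u) y1 - f x1 y1)) • u -
        (((d1 : ℝ) / μ1) * (f (x2 + μ1 • u) y2 - f x2 y2)) • u‖ ^ 2 ∂ν
      = ((d1:ℝ) / μ1) ^ 2 * ∫ u, G (μ1 • u) ^ 2 ∂ν := by
    rw [← integral_const_mul]
    refine integral_congr_ae ?_
    filter_upwards [hae] with u hu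
    rw [← sub_smul, norm_smul, Real.norm_eq_abs, hu, mul_one, sq_abs]
    have hc : ((d1 : ℝ) / μ1) * (f (x1 + μ1 • u) y1 - f x1 y1)
        - ((d1 : ℝ) / μ1) * (f (x2 + μ1 • u) y2 - f x2 y2) = ((d1:ℝ)/μ1) * G (μ1 • u) := by
      simp only [hGdef]; ring
    rw [hc, mul_pow]
  rw [hLHS]
  have hbound : ∫ u, G (μ1 • u) ^ 2 ∂ν
      ≤ 2 * μ1 * (s * μ1 * gn * (1 / d1)) - μ1 ^ 2 * (gn ^ 2 * (1 / d1)) + (l * μ1 ^ 2) ^ 2 := by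
    rw [hdecomp, hQ]
    have h1 : 2 * μ1 * (∫ u, ⟪g, u⟫ * G (μ1 • u) ∂ν) ≤ 2 * μ1 * (s * μ1 * gn * (1 / d1)) :=
      mul_le_mul_of_nonneg_left hP (by positivity)
    linarith [hDint]
  have hpos : (0:ℝ) ≤ ((d1:ℝ)/μ1)^2 := sq_nonneg _
  have hga : 0 ≤ gn := norm_nonneg g
  have hd0 : (0:ℝ) ≤ (d1:ℝ) := by linarith
  have hss : s = l * (a + b) := hs
  have hann : 0 ≤ a := norm_nonneg _
  have hbnn : 0 ≤ b := norm_nonneg _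
  calc ((d1:ℝ) / μ1) ^ 2 * ∫ u, G (μ1 • u) ^ 2 ∂ν
      ≤ ((d1:ℝ) / μ1) ^ 2 *
        (2 * μ1 * (s * μ1 * gn * (1 / d1)) - μ1 ^ 2 * (gn ^ 2 * (1 / d1)) + (l * μ1 ^ 2) ^ 2) :=
        mul_le_mul_of_nonneg_left hbound hpos
    _ = 2 * (d1:ℝ) * s * gn - (d1:ℝ) * gn ^ 2 + (d1:ℝ) ^ 2 * l ^ 2 * μ1 ^ 2 := by
        field_simp
    _ ≤ 3 * (d1 : ℝ) * l ^ 2 * (a ^ 2 + b ^ 2) + 3 / 2 * l ^ 2 * μ1 ^ 2 * (d1 : ℝ) ^ 2 := by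
        have hds2 : (d1:ℝ) * s ^ 2 = (d1:ℝ) * (l ^ 2 * (a + b) ^ 2) := by rw [hs]; ring
        nlinarith [hds2, mul_nonneg hd0 (sq_nonneg (s - gn)),
          mul_nonneg (mul_nonneg hd0 (sq_nonneg l)) (sq_nonneg (a - b)),
          mul_nonneg (mul_nonneg hd0 (sq_nonneg l)) (add_nonneg (sq_nonneg a) (sq_nonneg b)),
          mul_nonneg (mul_nonneg (sq_nonneg ((d1:ℝ))) (sq_nonneg l)) (sq_nonneg μ1)]
end

section
/- Let Ψ : ℝ^{d1} → ℝ be differentiable with L̄-Lipschitz gradient. Then for any x, m, v ∈ ℝ^{d1} and α > 0: Ψ(x − αm) ≤ Ψ(x) + α‖∇Ψ(x) − v‖² + α‖v − m‖² − (α/2)‖∇Ψ(x)‖² − (α/2)(1 − αL̄)‖m‖². -/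
open MeasureTheory Metric

local notation "⟪" a ", " b "⟫" => @inner ℝ _ _ a b

lemma descent_aux {d1 : ℕ}
    (Ψ : EuclideanSpace ℝ (Fin d1) → ℝ) (Lb : ℝ)
    (hdiff : Differentiable ℝ Ψ)
    (hlip : ∀ x1 x2, ‖gradient Ψ x1 - gradient Ψ x2‖ ≤ Lb * ‖x1 - x2‖)
    (x h : EuclideanSpace ℝ (Fin d1)) :
    Ψ (x + h) ≤ Ψ x + ⟪gradient Ψ x, h⟫ + Lb / 2 * ‖h‖ ^ 2 := by
  set g : ℝ → ℝ := fun t => Ψ (x + t • h) - t * ⟪gradient Ψ x, h⟫ - t ^ 2 * (Lb / 2) * ‖h‖ ^ 2 with hg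
  have hcurve : ∀ t : ℝ, HasDerivAt (fun t : ℝ => x + t • h) h t := by
    intro t
    simpa using ((hasDerivAt_id t).smul_const h).const_add x
  have hΨd : ∀ t : ℝ, HasDerivAt (fun t : ℝ => Ψ (x + t • h))
      ⟪gradient Ψ (x + t • h), h⟫ t := by
    intro t
    have h1 : HasFDerivAt Ψ (InnerProductSpace.toDual ℝ _ (gradient Ψ (x + t • h))) (x + t • h) :=
      (hasGradientAt_iff_hasFDerivAt.mp (hdiff _).hasGradientAt)
    exact h1.comp_hasDerivAt t (hcurve t)
  have hgd : ∀ t : ℝ, HasDerivAt g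
      (⟪gradient Ψ (x + t • h), h⟫ - ⟪gradient Ψ x, h⟫ - t * Lb * ‖h‖ ^ 2) t := by
    intro t
    have h2 : HasDerivAt (fun t : ℝ => t * ⟪gradient Ψ x, h⟫) ⟪gradient Ψ x, h⟫ t := by
      simpa using (hasDerivAt_id t).mul_const ⟪gradient Ψ x, h⟫
    have h3 : HasDerivAt (fun t : ℝ => t ^ 2 * (Lb / 2) * ‖h‖ ^ 2)
        (t * Lb * ‖h‖ ^ 2) t := by
      have := ((hasDerivAt_pow 2 t).mul_const (Lb / 2)).mul_const (‖h‖ ^ 2)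
      exact this.congr_deriv (by rw [show (2:ℕ) - 1 = 1 from rfl]; push_cast; ring)
    exact ((hΨd t).sub h2).sub h3
  have hanti : AntitoneOn g (Set.Icc 0 1) := by
    apply antitoneOn_of_deriv_nonpos (convex_Icc 0 1)
    · exact (Continuous.continuousOn (by
        have := hdiff.continuous; fun_prop))
    · intro t ht
      exact ((hgd t).differentiableAt.differentiableWithinAt)
    · intro t ht
      rw [interior_Icc] at ht
      rw [(hgd t).deriv]
      have hb : ⟪gradient Ψ (x + t • h) - gradient Ψ x, h⟫ ≤ t * Lb * ‖h‖ ^ 2 := by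
        calc ⟪gradient Ψ (x + t • h) - gradient Ψ x, h⟫
            ≤ ‖gradient Ψ (x + t • h) - gradient Ψ x‖ * ‖h‖ := real_inner_le_norm _ _
          _ ≤ (Lb * ‖x + t • h - x‖) * ‖h‖ := by
              apply mul_le_mul_of_nonneg_right (hlip _ _) (norm_nonneg _)
          _ = t * Lb * ‖h‖ ^ 2 := by
              rw [add_sub_cancel_left, norm_smul, Real.norm_eq_abs,
                abs_of_nonneg ht.1.le]
              ring
      have := inner_sub_left (𝕜 := ℝ) (gradient Ψ (x + t • h)) (gradient Ψ x) h
      linarith [hb, this.symm.le, this.le]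
  have h01 := hanti (Set.left_mem_Icc.mpr zero_le_one) (Set.right_mem_Icc.mpr zero_le_one) zero_le_one
  simp only [hg, one_smul, zero_smul, add_zero, one_pow, zero_pow, one_mul, zero_mul,
    sub_zero] at h01
  linarith

/-- Descent inequality for an `L̄`-smooth function `Ψ` after one inexact gradient step
`x⁺ = x − αm`:
`Ψ(x − αm) ≤ Ψ(x) + α‖∇Ψ(x) − v‖² + α‖v − m‖² − (α/2)‖∇Ψ(x)‖² − (α/2)(1 − αL̄)‖m‖²`. -/
theorem smooth_descent_inexact_step {d1 : ℕ}
    (Ψ : EuclideanSpace ℝ (Fin d1) → ℝ) (Lb : ℝ)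
    (hdiff : Differentiable ℝ Ψ)
    (hlip : ∀ x1 x2, ‖gradient Ψ x1 - gradient Ψ x2‖ ≤ Lb * ‖x1 - x2‖) :
    ∀ (x m v : EuclideanSpace ℝ (Fin d1)) (α : ℝ), 0 < α →
      Ψ (x - α • m) ≤
        Ψ x + α * ‖gradient Ψ x - v‖ ^ 2 + α * ‖v - m‖ ^ 2 - α / 2 * ‖gradient Ψ x‖ ^ 2 -
          α / 2 * (1 - α * Lb) * ‖m‖ ^ 2 := by
  intro x m v α hα
  have key := descent_aux Ψ Lb hdiff hlip x (-(α • m))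
  rw [← sub_eq_add_neg] at key
  set G := gradient Ψ x with hG
  have hinner : ⟪G, -(α • m)⟫ = -α * ⟪G, m⟫ := by
    rw [inner_neg_right, real_inner_smul_right]; ring
  have hnorm : ‖-(α • m)‖ ^ 2 = α ^ 2 * ‖m‖ ^ 2 := by
    rw [norm_neg, norm_smul, Real.norm_eq_abs, mul_pow, sq_abs]
  have hexp : ‖G - m‖ ^ 2 = ‖G‖ ^ 2 - 2 * ⟪G, m⟫ + ‖m‖ ^ 2 := by
    rw [norm_sub_sq_real]
  have htri : ‖G - m‖ ^ 2 ≤ 2 * ‖G - v‖ ^ 2 + 2 * ‖v - m‖ ^ 2 := by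
    have h1 : ‖G - m‖ ≤ ‖G - v‖ + ‖v - m‖ := by
      simpa using norm_sub_le_norm_sub_add_norm_sub G v m
    nlinarith [norm_nonneg (G - m), norm_nonneg (G - v), norm_nonneg (v - m),
      sq_nonneg (‖G - v‖ - ‖v - m‖)]
  rw [hinner, hnorm] at key
  nlinarith [key, htri, hexp]
end
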